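/- arXiv:0907.2820 — 7 statements merged into one kernel-verified Lean document; each statement's English description precedes it below -/
import Mathlib

section
/- Let μ be a σ-finite measure on a measurable space X, let N ≥ 1, and let f_1, …, f_N : X → ℂ be measurable functions belonging to L²(μ). Then ∫_{X^N} |det(f_i(x_j))_{1≤i,j≤N}|² dμ^{⊗N}(x_1,…,x_N) = N! · det G(μ), where G(μ) is the Gram matrix of the f_i with respect to μ. -/
open MeasureTheory

private lemma fubini_prod_aux {X : Type*} [MeasurableSpace X] (μ : Measure X) [SigmaFinite μ]
    {N : ℕ} (g : Fin N → X → ℂ) :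
    ∫ x : Fin N → X, ∏ i, g i (x i) ∂(Measure.pi fun _ => μ) = ∏ i, ∫ y, g i y ∂μ := by
  letI : MeasureSpace X := ⟨μ⟩
  exact MeasureTheory.integral_fin_nat_prod_eq_prod g

private lemma integrable_prod_aux {X : Type*} [MeasurableSpace X] (μ : Measure X) [SigmaFinite μ]
    {N : ℕ} (g : Fin N → X → ℂ) (hg : ∀ i, Integrable (g i) μ) :
    Integrable (fun x : Fin N → X => ∏ i, g i (x i)) (Measure.pi fun _ => μ) := by
  letI : MeasureSpace X := ⟨μ⟩
  exact Integrable.fin_nat_prod hg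

private lemma sq_sign_aux {N : ℕ} (σ : Equiv.Perm (Fin N)) :
    (((Equiv.Perm.sign σ : ℤ) : ℂ)) * (((Equiv.Perm.sign σ : ℤ) : ℂ)) = 1 := by
  rw [← Int.cast_mul, ← Units.val_mul, Int.units_mul_self, Units.val_one, Int.cast_one]

private lemma sum_perm_aux {N : ℕ} (G : Matrix (Fin N) (Fin N) ℂ) :
    ∑ σ : Equiv.Perm (Fin N), ∑ τ : Equiv.Perm (Fin N),
      ((((Equiv.Perm.sign σ : ℤ) : ℂ)) * (((Equiv.Perm.sign τ : ℤ) : ℂ))) * ∏ j, G (σ j) (τ j)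
      = (N.factorial : ℂ) * G.det := by
  have h1 : ∀ σ : Equiv.Perm (Fin N),
      ∑ τ : Equiv.Perm (Fin N), (((Equiv.Perm.sign τ : ℤ) : ℂ)) * ∏ j, G (σ j) (τ j)
        = (((Equiv.Perm.sign σ : ℤ) : ℂ)) * G.det := by
    intro σ
    calc ∑ τ : Equiv.Perm (Fin N), (((Equiv.Perm.sign τ : ℤ) : ℂ)) * ∏ j, G (σ j) (τ j)
        = ∑ π : Equiv.Perm (Fin N),
            (((Equiv.Perm.sign (π * σ) : ℤ) : ℂ)) * ∏ j, G (σ j) ((π * σ) j) :=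
          (Equiv.sum_comp (Equiv.mulRight σ)
            (fun τ => (((Equiv.Perm.sign τ : ℤ) : ℂ)) * ∏ j, G (σ j) (τ j))).symm
      _ = ∑ π : Equiv.Perm (Fin N),
            (((Equiv.Perm.sign σ : ℤ) : ℂ)) *
              ((((Equiv.Perm.sign π : ℤ) : ℂ)) * ∏ k, G k (π k)) := by
          refine Finset.sum_congr rfl fun π _ => ?_
          have hp : ∏ j, G (σ j) ((π * σ) j) = ∏ k, G k (π k) := by
            simpa [Equiv.Perm.mul_apply] using Equiv.prod_comp σ (fun k => G k (π k))
          rw [hp, Equiv.Perm.sign_mul]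
          push_cast
          ring
      _ = (((Equiv.Perm.sign σ : ℤ) : ℂ)) * G.det := by
          rw [← Finset.mul_sum, ← Matrix.det_transpose G, Matrix.det_apply']
          simp [Matrix.transpose_apply]
  calc ∑ σ : Equiv.Perm (Fin N), ∑ τ : Equiv.Perm (Fin N),
      ((((Equiv.Perm.sign σ : ℤ) : ℂ)) * (((Equiv.Perm.sign τ : ℤ) : ℂ))) * ∏ j, G (σ j) (τ j)
      = ∑ σ : Equiv.Perm (Fin N), (((Equiv.Perm.sign σ : ℤ) : ℂ)) *
          ∑ τ : Equiv.Perm (Fin N), (((Equiv.Perm.sign τ : ℤ) : ℂ)) * ∏ j, G (σ j) (τ j) := by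
        refine Finset.sum_congr rfl fun σ _ => ?_
        rw [Finset.mul_sum]
        exact Finset.sum_congr rfl fun τ _ => by ring
    _ = ∑ _σ : Equiv.Perm (Fin N), G.det := by
        refine Finset.sum_congr rfl fun σ _ => ?_
        rw [h1 σ, ← mul_assoc, sq_sign_aux, one_mul]
    _ = (N.factorial : ℂ) * G.det := by
        rw [Finset.sum_const, Finset.card_univ, Fintype.card_perm, Fintype.card_fin,
          nsmul_eq_mul]

/-- The squared `L²(μ^{⊗N})` norm of the Vandermonde-type determinant
`(x₁,…,x_N) ↦ det (f i (x j))` equals `N!` times the determinant of the Gram matrix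
of `f₁,…,f_N` with respect to `μ`. -/
theorem stmt_1 {X : Type*} [MeasurableSpace X] (μ : Measure X) [SigmaFinite μ]
    (N : ℕ) (hN : 1 ≤ N) (f : Fin N → X → ℂ)
    (hmeas : ∀ i, Measurable (f i)) (hL2 : ∀ i, MemLp (f i) 2 μ) :
    ((∫ x : Fin N → X, ‖(Matrix.of fun i j => f i (x j)).det‖ ^ 2
        ∂(Measure.pi fun _ => μ) : ℝ) : ℂ) =
      (N.factorial : ℂ) *
        (Matrix.of fun i j => ∫ y, f i y * (starRingEnd ℂ) (f j y) ∂μ).det := by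
  classical
  have hconjmem : ∀ j, MemLp (fun x => (starRingEnd ℂ) (f j x)) 2 μ := fun j =>
    (hL2 j).of_le ((continuous_star.measurable.comp (hmeas j)).aestronglyMeasurable)
      (Filter.Eventually.of_forall fun x => by simp)
  have hint : ∀ i j, Integrable (fun x => f i x * (starRingEnd ℂ) (f j x)) μ := by
    intro i j
    have h22 : (2 : ENNReal) / 2 = 1 := ENNReal.div_self (by norm_num) ENNReal.ofNat_ne_top
    have h12 : (1 : ENNReal) / 1 = 1 / 2 + 1 / 2 := by
      rw [ENNReal.div_add_div_same, div_one, show (1 : ENNReal) + 1 = 2 from by norm_num, h22]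
    have := ((hconjmem j).smul (hL2 i) (r := 1) (hpqr := ⟨by simpa [one_div] using h12.symm⟩))
    rw [smul_eq_mul] at this
    exact memLp_one_iff_integrable.mp this
  have hD : ∀ x : Fin N → X,
      ((‖(Matrix.of fun i j => f i (x j)).det‖ ^ 2 : ℝ) : ℂ)
        = ∑ σ : Equiv.Perm (Fin N), ∑ τ : Equiv.Perm (Fin N),
            ((((Equiv.Perm.sign σ : ℤ) : ℂ)) * (((Equiv.Perm.sign τ : ℤ) : ℂ))) *
              ∏ j, (f (σ j) (x j) * (starRingEnd ℂ) (f (τ j) (x j))) := by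
    intro x
    have h1 : ((‖(Matrix.of fun i j => f i (x j)).det‖ ^ 2 : ℝ) : ℂ)
        = ((Matrix.of fun i j => f i (x j)).det) *
            (starRingEnd ℂ) ((Matrix.of fun i j => f i (x j)).det) := by
      rw [Complex.mul_conj, ← Complex.sq_norm]
    rw [h1, Matrix.det_apply', map_sum, Finset.sum_mul_sum]
    refine Finset.sum_congr rfl fun σ _ => Finset.sum_congr rfl fun τ _ => ?_
    rw [map_mul, map_prod, mul_mul_mul_comm, ← Finset.prod_mul_distrib]
    simp [Matrix.of_apply]
  have hfub : ∀ σ τ : Equiv.Perm (Fin N),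
      ∫ x : Fin N → X, ∏ j, (f (σ j) (x j) * (starRingEnd ℂ) (f (τ j) (x j)))
          ∂(Measure.pi fun _ => μ)
        = ∏ j, ∫ y, f (σ j) y * (starRingEnd ℂ) (f (τ j) y) ∂μ := fun σ τ =>
    fubini_prod_aux μ (fun j y => f (σ j) y * (starRingEnd ℂ) (f (τ j) y))
  have hintegrable : ∀ σ τ : Equiv.Perm (Fin N),
      Integrable (fun x : Fin N → X =>
        ((((Equiv.Perm.sign σ : ℤ) : ℂ)) * (((Equiv.Perm.sign τ : ℤ) : ℂ))) *
          ∏ j, (f (σ j) (x j) * (starRingEnd ℂ) (f (τ j) (x j)))) (Measure.pi fun _ => μ) :=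
    fun σ τ => (integrable_prod_aux μ (fun j y => f (σ j) y * (starRingEnd ℂ) (f (τ j) y))
      (fun j => hint (σ j) (τ j))).const_mul _
  calc ((∫ x : Fin N → X, ‖(Matrix.of fun i j => f i (x j)).det‖ ^ 2
        ∂(Measure.pi fun _ => μ) : ℝ) : ℂ)
      = ∫ x : Fin N → X,
          ((‖(Matrix.of fun i j => f i (x j)).det‖ ^ 2 : ℝ) : ℂ)
          ∂(Measure.pi fun _ => μ) := integral_ofReal.symm
    _ = ∫ x : Fin N → X, ∑ σ : Equiv.Perm (Fin N), ∑ τ : Equiv.Perm (Fin N),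
          ((((Equiv.Perm.sign σ : ℤ) : ℂ)) * (((Equiv.Perm.sign τ : ℤ) : ℂ))) *
            ∏ j, (f (σ j) (x j) * (starRingEnd ℂ) (f (τ j) (x j)))
          ∂(Measure.pi fun _ => μ) := by
        exact integral_congr_ae (Filter.Eventually.of_forall hD)
    _ = ∑ σ : Equiv.Perm (Fin N), ∑ τ : Equiv.Perm (Fin N),
          ((((Equiv.Perm.sign σ : ℤ) : ℂ)) * (((Equiv.Perm.sign τ : ℤ) : ℂ))) *
            ∏ j, ∫ y, f (σ j) y * (starRingEnd ℂ) (f (τ j) y) ∂μ := by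
        rw [integral_finset_sum _ (fun σ _ => integrable_finset_sum _
          (fun τ _ => hintegrable σ τ))]
        refine Finset.sum_congr rfl fun σ _ => ?_
        rw [integral_finset_sum _ (fun τ _ => hintegrable σ τ)]
        refine Finset.sum_congr rfl fun τ _ => ?_
        rw [integral_const_mul, hfub σ τ]
    _ = (N.factorial : ℂ) *
        (Matrix.of fun i j => ∫ y, f i y * (starRingEnd ℂ) (f j y) ∂μ).det := by
        simpa using sum_perm_aux (Matrix.of fun i j => ∫ y, f i y * (starRingEnd ℂ) (f j y) ∂μ)
end

section
/- Let X be a measurable space, N ≥ 1, and let f_1, …, f_N : X → ℂ be measurable functions. Let μ_0 and μ_1 be finite measures on X such that each f_i lies in L²(μ_0) and in L²(μ_1). Then for every t ∈ [0,1], det G((1-t)μ_0 + tμ_1) ≥ (det G(μ_0))^{1-t} · (det G(μ_1))^t, where det G(μ) denotes the (real, nonnegative) determinant of the Gram matrix of the f_i with respect to μ. Equivalently, μ ↦ log det G(μ) is concave along segments of measures. -/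
open MeasureTheory Matrix
open scoped ComplexOrder

lemma psd_det_ofReal {n : Type*} [Fintype n] [DecidableEq n] {A : Matrix n n ℂ}
    (hA : A.PosSemidef) : A.det = (A.det.re : ℂ) ∧ 0 ≤ A.det.re := by
  have h : A.det = ((∏ i, hA.1.eigenvalues i : ℝ) : ℂ) := by
    rw [hA.1.det_eq_prod_eigenvalues]; push_cast; rfl
  have h2 : A.det.re = ∏ i, hA.1.eigenvalues i := by rw [h, Complex.ofReal_re]
  exact ⟨by rw [h]; rw [Complex.ofReal_re], h2 ▸ Finset.prod_nonneg (fun i _ => hA.eigenvalues_nonneg i)⟩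

lemma integrable_mul_conj {X : Type*} [MeasurableSpace X] (μ : Measure X)
    (g h : X → ℂ) (hhm : Measurable h)
    (hg : MemLp g 2 μ) (hh : MemLp h 2 μ) :
    Integrable (fun x => g x * (starRingEnd ℂ) (h x)) μ := by
  have hconj : MemLp (fun x => (starRingEnd ℂ) (h x)) 2 μ := by
    refine hh.of_le ((continuous_star.measurable.comp hhm).aestronglyMeasurable) ?_
    filter_upwards with x
    simp
  have := hg.smul (E := ℂ) (𝕜 := ℂ) hconj (p := 2) (q := 2) (r := 1)
    (hpqr := ⟨by simp [ENNReal.inv_two_add_inv_two]⟩)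
  rw [memLp_one_iff_integrable] at this
  convert this using 1
  ext x
  simp [smul_eq_mul, mul_comm]

lemma gram_psd {X : Type*} [MeasurableSpace X] {N : ℕ} (f : Fin N → X → ℂ)
    (μ : Measure X)
    (hint : ∀ i j, Integrable (fun x => f i x * (starRingEnd ℂ) (f j x)) μ) :
    (Matrix.of fun i j => ∫ x, f i x * (starRingEnd ℂ) (f j x) ∂μ).PosSemidef := by
  rw [Matrix.posSemidef_iff_dotProduct_mulVec]
  constructor
  · ext i j
    simp only [Matrix.conjTranspose_apply, Matrix.of_apply, RCLike.star_def]
    rw [← integral_conj]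
    congr 1; ext a; simp [mul_comm]
  · intro x
    set M : Matrix (Fin N) (Fin N) ℂ :=
      Matrix.of fun i j => ∫ a, f i a * (starRingEnd ℂ) (f j a) ∂μ with hM
    set h : X → ℂ := fun a => ∑ i, (starRingEnd ℂ) (x i) * f i a with hh
    have key : star x ⬝ᵥ (M *ᵥ x) = ∫ a, h a * (starRingEnd ℂ) (h a) ∂μ := by
      have e1 : ∀ i j, (starRingEnd ℂ) (x i) * ((∫ a, f i a * (starRingEnd ℂ) (f j a) ∂μ) * x j)
          = ∫ a, ((starRingEnd ℂ) (x i) * x j) * (f i a * (starRingEnd ℂ) (f j a)) ∂μ := by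
        intro i j; rw [integral_const_mul]; ring
      calc star x ⬝ᵥ (M *ᵥ x)
          = ∑ i, ∑ j, ∫ a, ((starRingEnd ℂ) (x i) * x j)
              * (f i a * (starRingEnd ℂ) (f j a)) ∂μ := by
            simp only [dotProduct, Matrix.mulVec, Pi.star_apply, RCLike.star_def,
              Finset.mul_sum, hM, Matrix.of_apply]
            exact Finset.sum_congr rfl fun i _ => Finset.sum_congr rfl fun j _ => e1 i j
        _ = ∫ a, ∑ i, ∑ j, ((starRingEnd ℂ) (x i) * x j)
              * (f i a * (starRingEnd ℂ) (f j a)) ∂μ := by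
            rw [integral_finset_sum]
            · exact Finset.sum_congr rfl fun i _ => (integral_finset_sum _
                fun j _ => ((hint i j).const_mul _)).symm
            · exact fun i _ => integrable_finset_sum _ fun j _ => ((hint i j).const_mul _)
        _ = ∫ a, h a * (starRingEnd ℂ) (h a) ∂μ := by
            congr 1; ext a
            rw [hh]
            simp only [map_sum, Finset.sum_mul_sum]
            refine Finset.sum_congr rfl fun i _ => Finset.sum_congr rfl fun j _ => ?_
            rw [_root_.map_mul, Complex.conj_conj]
            ring
    rw [key]
    have : ∀ a, h a * (starRingEnd ℂ) (h a) = ((Complex.normSq (h a) : ℝ) : ℂ) := fun a => by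
      rw [Complex.mul_conj]
    simp_rw [this]
    have hnn : (0:ℂ) ≤ ((∫ a, Complex.normSq (h a) ∂μ : ℝ) : ℂ) :=
      Complex.zero_le_real.mpr (integral_nonneg fun a => Complex.normSq_nonneg _)
    exact le_of_le_of_eq hnn (integral_ofReal (𝕜 := ℂ)).symm

open scoped MatrixOrder in
lemma key_det {n : Type*} [Fintype n] [DecidableEq n] {A B : Matrix n n ℂ}
    (hA : A.PosSemidef) (hB : B.PosSemidef) {t : ℝ} (ht0 : 0 ≤ t) (ht1 : t ≤ 1)
    (hS : (((1 - t : ℝ) : ℂ) • A + ((t : ℝ) : ℂ) • B).PosSemidef) :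
    (((1 - t : ℝ) : ℂ) • A + ((t : ℝ) : ℂ) • B).det.re ≥
      A.det.re ^ (1 - t) * B.det.re ^ t := by
  obtain ⟨hAdet, hAnn⟩ := psd_det_ofReal hA
  obtain ⟨hBdet, hBnn⟩ := psd_det_ofReal hB
  obtain ⟨hSdet, hSnn⟩ := psd_det_ofReal hS
  by_cases hdA : A.det.re = 0
  · by_cases ht : t = 1
    · subst ht
      simp only [sub_self, Complex.ofReal_zero, zero_smul, Complex.ofReal_one, one_smul,
        zero_add, Real.rpow_zero, Real.rpow_one, one_mul, ge_iff_le, le_refl]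
    · have h1t : (0:ℝ) < 1 - t := by
        rcases lt_or_eq_of_le ht1 with h | h
        · linarith
        · exact absurd h ht
      rw [hdA, Real.zero_rpow (ne_of_gt h1t), zero_mul]
      exact hSnn
  · have hdApos : 0 < A.det.re := lt_of_le_of_ne hAnn (Ne.symm hdA)
    have hdetA : A.det ≠ 0 := by
      rw [hAdet]; exact_mod_cast hdA
    set R := CFC.sqrt A with hRdef
    have hR : R.PosSemidef := (CFC.sqrt_nonneg A).posSemidef
    have hRR : R * R = A := CFC.sqrt_mul_sqrt_self A hA.nonneg
    have hdetRu : IsUnit R.det := by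
      refine isUnit_iff_ne_zero.mpr fun h => hdetA ?_
      rw [← hRR, det_mul, h, zero_mul]
    have h1 : R * R⁻¹ = 1 := mul_nonsing_inv R hdetRu
    have h2 : R⁻¹ * R = 1 := nonsing_inv_mul R hdetRu
    have hinvH : R⁻¹ᴴ = R⁻¹ := by
      rw [conjTranspose_nonsing_inv, hR.1.eq]
    set C := R⁻¹ * B * R⁻¹ with hCdef
    have hC : C.PosSemidef := by
      have := hB.mul_mul_conjTranspose_same R⁻¹
      rwa [hinvH] at this
    have hRCR : R * C * R = B := by
      have : R * (R⁻¹ * B * R⁻¹) * R = (R * R⁻¹) * B * (R⁻¹ * R) := by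
        simp only [Matrix.mul_assoc]
      rw [hCdef, this, h1, h2, Matrix.one_mul, Matrix.mul_one]
    -- factor S
    have hfact : R * (((1 - t : ℝ) : ℂ) • (1 : Matrix n n ℂ) + ((t : ℝ) : ℂ) • C) * R
        = ((1 - t : ℝ) : ℂ) • A + ((t : ℝ) : ℂ) • B := by
      rw [Matrix.mul_add, Matrix.add_mul, Matrix.mul_smul, Matrix.mul_smul,
        Matrix.smul_mul, Matrix.smul_mul, Matrix.mul_one, hRR, hRCR]
    -- spectral decomposition of the middle factor
    set ev := hC.1.eigenvalues with hev
    set U : Matrix n n ℂ := (Matrix.IsHermitian.eigenvectorUnitary hC.1 : Matrix n n ℂ) with hU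
    have hUU : U * star U = 1 := (Matrix.mem_unitaryGroup_iff).mp
      (Matrix.IsHermitian.eigenvectorUnitary hC.1).2
    have hspec : C = U * diagonal (RCLike.ofReal ∘ ev) * star U := by
      have := hC.1.spectral_theorem; rwa [Unitary.conjStarAlgAut_apply] at this
    have hMfact : ((1 - t : ℝ) : ℂ) • (1 : Matrix n n ℂ) + ((t : ℝ) : ℂ) • C
        = U * (diagonal fun i => ((1 - t : ℝ) : ℂ) + ((t : ℝ) : ℂ) * (ev i : ℂ)) * star U := by
      have hdiag : (diagonal fun i => ((1 - t : ℝ) : ℂ) + ((t : ℝ) : ℂ) * (ev i : ℂ))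
          = ((1 - t : ℝ) : ℂ) • (1 : Matrix n n ℂ)
            + ((t : ℝ) : ℂ) • diagonal (RCLike.ofReal ∘ ev) := by
        ext i j
        rcases eq_or_ne i j with rfl | hij
        · simp [Matrix.diagonal_apply_eq, smul_eq_mul]
        · simp [Matrix.diagonal_apply_ne _ hij, Matrix.one_apply_ne hij, hij]
      rw [hdiag, Matrix.mul_add, Matrix.add_mul, Matrix.mul_smul, Matrix.mul_smul,
        Matrix.smul_mul, Matrix.smul_mul, Matrix.mul_one, hUU, ← hspec]
    -- determinant computation
    have hdetS : (((1 - t : ℝ) : ℂ) • A + ((t : ℝ) : ℂ) • B).det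
        = A.det * ∏ i, (((1 - t : ℝ) : ℂ) + ((t : ℝ) : ℂ) * (ev i : ℂ)) := by
      rw [← hfact, det_mul, det_mul, hMfact, det_mul, det_mul, det_diagonal]
      have : U.det * (star U).det = 1 := by rw [← det_mul, hUU, det_one]
      calc R.det * (U.det * (∏ i, (((1 - t : ℝ) : ℂ) + ((t : ℝ) : ℂ) * (ev i : ℂ))) * (star U).det) * R.det
          = (R.det * R.det) * (U.det * (star U).det)
              * ∏ i, (((1 - t : ℝ) : ℂ) + ((t : ℝ) : ℂ) * (ev i : ℂ)) := by ring
        _ = A.det * ∏ i, (((1 - t : ℝ) : ℂ) + ((t : ℝ) : ℂ) * (ev i : ℂ)) := by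
            rw [this, ← det_mul, hRR, mul_one]
    -- real form of LHS determinant
    have hSre : (((1 - t : ℝ) : ℂ) • A + ((t : ℝ) : ℂ) • B).det.re
        = A.det.re * ∏ i, ((1 - t) + t * ev i) := by
      have : (((1 - t : ℝ) : ℂ) • A + ((t : ℝ) : ℂ) • B).det
          = ((A.det.re * ∏ i, ((1 - t) + t * ev i) : ℝ) : ℂ) := by
        rw [hdetS, hAdet]
        push_cast
        rfl
      rw [this, Complex.ofReal_re]
    -- det C equals det B / det A
    have hdetC : C.det * A.det = B.det := by
      rw [hCdef, det_mul, det_mul, det_nonsing_inv, ← hRR, det_mul]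
      rw [Ring.inverse_eq_inv']
      have hdR : R.det ≠ 0 := hdetRu.ne_zero
      field_simp
    have hCprod : C.det = ((∏ i, ev i : ℝ) : ℂ) := by
      rw [hC.1.det_eq_prod_eigenvalues]; push_cast; rfl
    have hprodA : (∏ i, ev i) * A.det.re = B.det.re := by
      have := hdetC
      rw [hCprod, hAdet, hBdet, ← Complex.ofReal_mul] at this
      exact_mod_cast this
    have hBover : ∏ i, ev i = B.det.re / A.det.re := by
      field_simp [hdA] at hprodA ⊢
      linarith [hprodA]
    -- the AM-GM inequality on the eigenvalue product
    have hstep : ∏ i, ((ev i) ^ t) ≤ ∏ i, ((1 - t) + t * ev i) := by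
      refine Finset.prod_le_prod (fun i _ => Real.rpow_nonneg (hC.eigenvalues_nonneg i) t)
        (fun i _ => ?_)
      have := Real.geom_mean_le_arith_mean2_weighted (by linarith : (0:ℝ) ≤ 1 - t) ht0
        zero_le_one (hC.eigenvalues_nonneg i) (by ring)
      simpa [Real.one_rpow] using this
    have hprodpow : ∏ i, ((ev i) ^ t) = (∏ i, ev i) ^ t := by
      rw [← Real.finset_prod_rpow _ _ (fun i _ => hC.eigenvalues_nonneg i)]
    -- conclude
    rw [hSre]
    have hrhs : A.det.re ^ (1 - t) * B.det.re ^ t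
        = A.det.re * ((B.det.re / A.det.re) ^ t) := by
      rw [Real.div_rpow hBnn (le_of_lt hdApos), Real.rpow_sub hdApos, Real.rpow_one]
      field_simp
    rw [ge_iff_le, hrhs]
    have : (B.det.re / A.det.re) ^ t ≤ ∏ i, ((1 - t) + t * ev i) := by
      rw [← hBover, ← hprodpow]
      exact hstep
    exact mul_le_mul_of_nonneg_left this (le_of_lt hdApos)
/-- Log-concavity of the Gram determinant along segments of measures: for finite
measures `μ₀, μ₁` and `t ∈ [0,1]`,
`det G((1-t)μ₀ + tμ₁) ≥ (det G(μ₀))^{1-t} (det G(μ₁))^t`. -/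
theorem stmt_6 {X : Type*} [MeasurableSpace X] (N : ℕ) (hN : 1 ≤ N)
    (f : Fin N → X → ℂ) (hmeas : ∀ i, Measurable (f i))
    (μ₀ μ₁ : Measure X) [IsFiniteMeasure μ₀] [IsFiniteMeasure μ₁]
    (h0 : ∀ i, MemLp (f i) 2 μ₀) (h1 : ∀ i, MemLp (f i) 2 μ₁) :
    ∀ t ∈ Set.Icc (0 : ℝ) 1,
      ((Matrix.of fun i j => ∫ x, f i x * (starRingEnd ℂ) (f j x)
          ∂(ENNReal.ofReal (1 - t) • μ₀ + ENNReal.ofReal t • μ₁)).det).re ≥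
        ((Matrix.of fun i j => ∫ x, f i x * (starRingEnd ℂ) (f j x) ∂μ₀).det).re ^ (1 - t) *
          ((Matrix.of fun i j => ∫ x, f i x * (starRingEnd ℂ) (f j x) ∂μ₁).det).re ^ t := by
  intro t ht
  obtain ⟨ht0, ht1⟩ := ht
  have hint0 : ∀ i j, Integrable (fun x => f i x * (starRingEnd ℂ) (f j x)) μ₀ :=
    fun i j => integrable_mul_conj μ₀ _ _ (hmeas j) (h0 i) (h0 j)
  have hint1 : ∀ i j, Integrable (fun x => f i x * (starRingEnd ℂ) (f j x)) μ₁ :=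
    fun i j => integrable_mul_conj μ₁ _ _ (hmeas j) (h1 i) (h1 j)
  set μc : Measure X := ENNReal.ofReal (1 - t) • μ₀ + ENNReal.ofReal t • μ₁ with hμc
  have hintc : ∀ i j, Integrable (fun x => f i x * (starRingEnd ℂ) (f j x)) μc :=
    fun i j => ((hint0 i j).smul_measure ENNReal.ofReal_ne_top).add_measure
      ((hint1 i j).smul_measure ENNReal.ofReal_ne_top)
  have hGc : (Matrix.of fun i j => ∫ x, f i x * (starRingEnd ℂ) (f j x) ∂μc)
      = ((1 - t : ℝ) : ℂ) • (Matrix.of fun i j => ∫ x, f i x * (starRingEnd ℂ) (f j x) ∂μ₀)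
        + ((t : ℝ) : ℂ) • (Matrix.of fun i j => ∫ x, f i x * (starRingEnd ℂ) (f j x) ∂μ₁) := by
    ext i j
    simp only [Matrix.of_apply, Matrix.add_apply, Matrix.smul_apply, smul_eq_mul]
    rw [hμc, integral_add_measure ((hint0 i j).smul_measure ENNReal.ofReal_ne_top)
        ((hint1 i j).smul_measure ENNReal.ofReal_ne_top),
      integral_smul_measure, integral_smul_measure,
      ENNReal.toReal_ofReal (by linarith : (0:ℝ) ≤ 1 - t), ENNReal.toReal_ofReal ht0]
    simp [Complex.real_smul]
  rw [hGc]
  exact key_det (gram_psd f μ₀ hint0) (gram_psd f μ₁ hint1) ht0 ht1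
    (hGc ▸ gram_psd f μc hintc)
end

section
/- Let μ be a finite measure on a measurable space X, let f_1, …, f_N : X → ℂ be bounded measurable functions that are linearly independent as elements of L²(μ), and let φ, v : X → ℝ be bounded measurable functions. For t ∈ ℝ let G(t) be the N×N matrix with entries G(t)_{ij} = ∫_X f_i · conj(f_j) · e^{-2(φ + t v)} dμ. Then det G(t) > 0 for every t ∈ ℝ and the function t ↦ log det G(t) is convex on ℝ. -/
open MeasureTheory

private lemma logConvexAux {α : Type*} [MeasurableSpace α] {μ : Measure α}
    {h V : α → ℝ} (hh : ∀ x, 0 ≤ h x)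
    (hm : ∀ t : ℝ, AEMeasurable (fun x => h x * Real.exp (t * V x)) μ)
    (hint : ∀ t : ℝ, Integrable (fun x => h x * Real.exp (t * V x)) μ)
    (hpos : ∀ t : ℝ, 0 < ∫ x, h x * Real.exp (t * V x) ∂μ) :
    ConvexOn ℝ Set.univ (fun t => Real.log (∫ x, h x * Real.exp (t * V x) ∂μ)) := by
  set I : ℝ → ℝ := fun t => ∫ x, h x * Real.exp (t * V x) ∂μ with hI
  set J : ℝ → ENNReal := fun t => ∫⁻ x, ENNReal.ofReal (h x * Real.exp (t * V x)) ∂μ with hJ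
  have hnn : ∀ t : ℝ, ∀ x, 0 ≤ h x * Real.exp (t * V x) := fun t x =>
    mul_nonneg (hh x) (Real.exp_pos _).le
  have hJI : ∀ t, J t = ENNReal.ofReal (I t) := fun t =>
    (ofReal_integral_eq_lintegral_ofReal (hint t) (ae_of_all _ (hnn t))).symm
  have hJtop : ∀ t, J t ≠ ⊤ := fun t => by rw [hJI]; exact ENNReal.ofReal_ne_top
  have hIJ : ∀ t, I t = (J t).toReal := fun t => by
    rw [hJI, ENNReal.toReal_ofReal (hpos t).le]
  refine ⟨convex_univ, fun p _ q _ a b ha hb hab => ?_⟩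
  rcases eq_or_lt_of_le ha with ha0 | ha
  · simp [← ha0, (by linarith : b = 1)]
  rcases eq_or_lt_of_le hb with hb0 | hb
  · simp [← hb0, (by linarith : a = 1)]
  simp only [smul_eq_mul]
  -- pointwise factorization
  have key : ∀ x, ENNReal.ofReal (h x * Real.exp ((a * p + b * q) * V x)) =
      ENNReal.ofReal (h x * Real.exp (p * V x)) ^ a *
      ENNReal.ofReal (h x * Real.exp (q * V x)) ^ b := by
    intro x
    have hre : h x * Real.exp ((a * p + b * q) * V x) =
        (h x * Real.exp (p * V x)) ^ a * (h x * Real.exp (q * V x)) ^ b := by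
      rw [Real.mul_rpow (hh x) (Real.exp_pos _).le, Real.mul_rpow (hh x) (Real.exp_pos _).le,
        ← Real.exp_mul, ← Real.exp_mul]
      rcases eq_or_lt_of_le (hh x) with h0 | h0
      · rw [← h0, Real.zero_rpow ha.ne', Real.zero_rpow hb.ne']; ring
      · rw [mul_mul_mul_comm, ← Real.rpow_add h0, hab, Real.rpow_one, ← Real.exp_add]
        ring_nf
    rw [hre, ENNReal.ofReal_mul (Real.rpow_nonneg (hnn p x) a),
      ENNReal.ofReal_rpow_of_nonneg (hnn p x) ha.le,
      ENNReal.ofReal_rpow_of_nonneg (hnn q x) hb.le]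
  have hholder : J (a * p + b * q) ≤ J p ^ a * J q ^ b := by
    calc J (a * p + b * q)
        = ∫⁻ x, ENNReal.ofReal (h x * Real.exp (p * V x)) ^ a *
            ENNReal.ofReal (h x * Real.exp (q * V x)) ^ b ∂μ := by
          simp only [hJ]; exact lintegral_congr key
      _ ≤ J p ^ a * J q ^ b :=
          ENNReal.lintegral_mul_norm_pow_le (hm p).ennreal_ofReal (hm q).ennreal_ofReal
            ha.le hb.le hab
  have hrhs_ne_top : J p ^ a * J q ^ b ≠ ⊤ :=
    ENNReal.mul_ne_top (ENNReal.rpow_ne_top_of_nonneg ha.le (hJtop p))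
      (ENNReal.rpow_ne_top_of_nonneg hb.le (hJtop q))
  have hIle : I (a * p + b * q) ≤ I p ^ a * I q ^ b := by
    rw [hIJ]
    calc (J (a * p + b * q)).toReal ≤ (J p ^ a * J q ^ b).toReal :=
          ENNReal.toReal_mono hrhs_ne_top hholder
      _ = I p ^ a * I q ^ b := by
          rw [ENNReal.toReal_mul, ← ENNReal.toReal_rpow, ← ENNReal.toReal_rpow, ← hIJ, ← hIJ]
  calc Real.log (I (a * p + b * q)) ≤ Real.log (I p ^ a * I q ^ b) :=
        Real.log_le_log (hpos _) hIle
    _ = a * Real.log (I p) + b * Real.log (I q) := by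
        rw [Real.log_mul (Real.rpow_pos_of_pos (hpos p) a).ne'
          (Real.rpow_pos_of_pos (hpos q) b).ne',
          Real.log_rpow (hpos p), Real.log_rpow (hpos q)]
section PosPart
open Matrix
open scoped ComplexOrder

private lemma stmt8_pos {X : Type*} [MeasurableSpace X] (μ : Measure X) [IsFiniteMeasure μ]
    (N : ℕ) (hN : 1 ≤ N) (f : Fin N → X → ℂ)
    (hmeas : ∀ i, Measurable (f i)) (hfb : ∀ i, ∃ C, ∀ x, ‖f i x‖ ≤ C)
    (φ v : X → ℝ) (hφm : Measurable φ) (hvm : Measurable v)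
    (hφb : ∃ C, ∀ x, |φ x| ≤ C) (hvb : ∃ C, ∀ x, |v x| ≤ C)
    (hind : ∀ a : Fin N → ℂ, (∀ᵐ x ∂μ, ∑ i, a i * f i x = 0) → a = 0) :
    ∀ t : ℝ, 0 < ((Matrix.of fun i j =>
        ∫ x, f i x * (starRingEnd ℂ) (f j x) *
          (Real.exp (-2 * (φ x + t * v x)) : ℂ) ∂μ).det).re := by
  choose Cf hCf using hfb
  obtain ⟨Cφ, hCφ⟩ := hφb
  obtain ⟨Cv, hCv⟩ := hvb
  set C : ℝ := 1 + ∑ i, |Cf i| with hCdef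
  have hC : ∀ i x, ‖f i x‖ ≤ C := by
    intro i x
    have h1 : ‖f i x‖ ≤ Cf i := hCf i x
    have h2 : Cf i ≤ ∑ j, |Cf j| :=
      le_trans (le_abs_self _) (Finset.single_le_sum (f := fun j => |Cf j|)
        (fun j _ => abs_nonneg _) (Finset.mem_univ i))
    rw [hCdef]; linarith
  -- weight facts
  set w : ℝ → X → ℝ := fun t x => Real.exp (-2 * (φ x + t * v x)) with hwdef
  have hw_pos : ∀ t x, 0 < w t x := fun t x => Real.exp_pos _
  have hw_meas : ∀ t : ℝ, Measurable (w t) := by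
    intro t
    exact (((hφm.add (hvm.const_mul t)).const_mul (-2)).exp)
  have hw_le : ∀ t x, w t x ≤ Real.exp (2 * Cφ + |t| * Cv * 2) := by
    intro t x
    apply Real.exp_le_exp.2
    have h1 := hCφ x
    have h2 : |t * v x| ≤ |t| * Cv := by
      rw [abs_mul]
      exact mul_le_mul_of_nonneg_left (hCv x) (abs_nonneg t)
    have h3 := abs_le.1 h1
    have h4 := abs_le.1 h2
    nlinarith
  -- entry integrand
  have hg_meas : ∀ (t : ℝ) (i j : Fin N),
      Measurable (fun x => f i x * (starRingEnd ℂ) (f j x) * ((w t x : ℝ) : ℂ)) := by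
    intro t i j
    exact ((hmeas i).mul ((Complex.continuous_conj.measurable).comp (hmeas j))).mul
      (Complex.measurable_ofReal.comp (hw_meas t))
  have hg_int : ∀ (t : ℝ) (i j : Fin N),
      Integrable (fun x => f i x * (starRingEnd ℂ) (f j x) * ((w t x : ℝ) : ℂ)) μ := by
    intro t i j
    refine ⟨(hg_meas t i j).aestronglyMeasurable,
      HasFiniteIntegral.of_bounded (C := C * C * Real.exp (2 * Cφ + |t| * Cv * 2))
        (ae_of_all _ fun x => ?_)⟩
    have h0 : ‖((w t x : ℝ) : ℂ)‖ ≤ Real.exp (2 * Cφ + |t| * Cv * 2) := by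
      rw [Complex.norm_real, Real.norm_eq_abs, abs_of_pos (hw_pos t x)]; exact hw_le t x
    have hC0 : (0:ℝ) ≤ C := le_trans (norm_nonneg _) (hC i x)
    calc ‖f i x * (starRingEnd ℂ) (f j x) * ((w t x : ℝ) : ℂ)‖
        = ‖f i x‖ * ‖f j x‖ * ‖((w t x : ℝ) : ℂ)‖ := by
          rw [norm_mul, norm_mul, RCLike.norm_conj]
      _ ≤ C * C * Real.exp (2 * Cφ + |t| * Cv * 2) := by
          gcongr
          · exact hC i x
          · exact hC j x
  intro t
  suffices hpd : (Matrix.of fun i j =>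
      ∫ x, f i x * (starRingEnd ℂ) (f j x) * ((w t x : ℝ) : ℂ) ∂μ).PosDef by
    have h2 := hpd.det_pos
    rw [Complex.lt_def] at h2
    simpa only [Complex.zero_re] using h2.1
  refine Matrix.PosDef.of_dotProduct_mulVec_pos ?_ ?_
  · -- Hermitian
    rw [Matrix.IsHermitian]
    ext i j
    simp only [Matrix.conjTranspose_apply, Matrix.of_apply]
    rw [RCLike.star_def, ← integral_conj]
    congr 1
    funext x
    simp only [_root_.map_mul, Complex.conj_conj, Complex.conj_ofReal]
    ring
  · intro a ha
    set g : X → ℂ := fun x => ∑ i, (starRingEnd ℂ) (a i) * f i x with hgdef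
    have hkey : (star a) ⬝ᵥ ((Matrix.of fun i j =>
        ∫ x, f i x * (starRingEnd ℂ) (f j x) * ((w t x : ℝ) : ℂ) ∂μ) *ᵥ a) =
        ((∫ x, Complex.normSq (g x) * w t x ∂μ : ℝ) : ℂ) := by
      have step1 : ∀ x, ((Complex.normSq (g x) * w t x : ℝ) : ℂ) =
          ∑ i, ∑ j, (starRingEnd ℂ) (a i) * a j *
            (f i x * (starRingEnd ℂ) (f j x) * ((w t x : ℝ) : ℂ)) := by
        intro x
        have : ((Complex.normSq (g x) : ℝ) : ℂ) = g x * (starRingEnd ℂ) (g x) :=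
          (Complex.mul_conj (g x)).symm
        rw [Complex.ofReal_mul, this, hgdef]
        rw [map_sum, Finset.sum_mul_sum]
        rw [Finset.sum_mul]
        refine Finset.sum_congr rfl fun i _ => ?_
        rw [Finset.sum_mul]
        refine Finset.sum_congr rfl fun j _ => ?_
        simp only [_root_.map_mul, Complex.conj_conj]
        ring
      have step2 : ((∫ x, Complex.normSq (g x) * w t x ∂μ : ℝ) : ℂ) =
          ∑ i, ∑ j, (starRingEnd ℂ) (a i) * a j *
            ∫ x, f i x * (starRingEnd ℂ) (f j x) * ((w t x : ℝ) : ℂ) ∂μ := by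
        rw [show ((∫ x, Complex.normSq (g x) * w t x ∂μ : ℝ) : ℂ) =
            ∫ x, ((Complex.normSq (g x) * w t x : ℝ) : ℂ) ∂μ from (integral_ofReal).symm]
        simp_rw [step1]
        rw [integral_finset_sum _ (fun i _ => integrable_finset_sum _
          (fun j _ => ((hg_int t i j).const_mul _)))]
        refine Finset.sum_congr rfl fun i _ => ?_
        rw [integral_finset_sum _ (fun j _ => ((hg_int t i j).const_mul _))]
        refine Finset.sum_congr rfl fun j _ => ?_
        rw [integral_const_mul]
      rw [step2]
      simp only [dotProduct, Matrix.mulVec, Matrix.of_apply, Pi.star_apply,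
        dotProduct]
      refine Finset.sum_congr rfl fun i _ => ?_
      rw [Finset.mul_sum]
      refine Finset.sum_congr rfl fun j _ => ?_
      simp only [RCLike.star_def]
      ring
    rw [hkey]
    have hgm : Measurable g :=
      Finset.measurable_sum _ fun i _ => (measurable_const.mul (hmeas i))
    have hint : Integrable (fun x => Complex.normSq (g x) * w t x) μ := by
      have hb : ∀ x, ‖g x‖ ≤ ∑ i, ‖a i‖ * C := by
        intro x
        refine le_trans (norm_sum_le _ _) (Finset.sum_le_sum fun i _ => ?_)
        rw [norm_mul, RCLike.norm_conj]
        exact mul_le_mul_of_nonneg_left (hC i x) (norm_nonneg _)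
      refine ⟨((Complex.continuous_normSq.measurable.comp hgm).mul (hw_meas t)).aestronglyMeasurable,
        HasFiniteIntegral.of_bounded
          (C := (∑ i, ‖a i‖ * C)^2 * Real.exp (2 * Cφ + |t| * Cv * 2))
          (ae_of_all _ fun x => ?_)⟩
      rw [Real.norm_eq_abs, abs_mul, abs_of_nonneg (Complex.normSq_nonneg _),
        abs_of_pos (hw_pos t x)]
      have h1 : Complex.normSq (g x) ≤ (∑ i, ‖a i‖ * C)^2 := by
        rw [Complex.normSq_eq_norm_sq]
        have := hb x
        have h0 : (0:ℝ) ≤ ‖g x‖ := norm_nonneg _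
        nlinarith
      have h2 := hw_le t x
      have h3 := (hw_pos t x).le
      nlinarith [Complex.normSq_nonneg (g x), Real.exp_pos (2 * Cφ + |t| * Cv * 2)]
    have hipos : 0 < ∫ x, Complex.normSq (g x) * w t x ∂μ := by
      rcases lt_or_eq_of_le (integral_nonneg (f := fun x => Complex.normSq (g x) * w t x) (fun x =>
        mul_nonneg (Complex.normSq_nonneg _) (hw_pos t x).le)) with h | h
      · exact h
      exfalso
      have hz := (integral_eq_zero_iff_of_nonneg (fun x =>
        mul_nonneg (Complex.normSq_nonneg _) (hw_pos t x).le) hint).1 h.symm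
      have hg0 : ∀ᵐ x ∂μ, ∑ i, (starRingEnd ℂ) (a i) * f i x = 0 := by
        filter_upwards [hz] with x hx
        have : Complex.normSq (g x) = 0 := by
          by_contra hne
          exact hne (by
            have := hw_pos t x
            have : Complex.normSq (g x) * w t x = 0 := hx
            exact (mul_eq_zero.1 this).resolve_right (hw_pos t x).ne')
        exact Complex.normSq_eq_zero.1 this
      have := hind _ hg0
      apply ha
      funext i
      have : (starRingEnd ℂ) (a i) = 0 := congrFun this i
      simpa using congrArg (starRingEnd ℂ) this
    exact Complex.lt_def.2 ⟨by simpa using hipos, by simp⟩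
end PosPart

section DetPart
open Matrix


private lemma integrable_bdd' {α E : Type*} [MeasurableSpace α] {μ : Measure α} [IsFiniteMeasure μ]
    [NormedAddCommGroup E] {g : α → E} (hg : AEStronglyMeasurable g μ)
    {C : ℝ} (h : ∀ x, ‖g x‖ ≤ C) : Integrable g μ :=
  ⟨hg, HasFiniteIntegral.of_bounded (ae_of_all _ h)⟩

private lemma integral_perm_comp {X : Type*} [MeasurableSpace X] (μ : Measure X) [SigmaFinite μ]
    {n : ℕ} (τ : Equiv.Perm (Fin n)) (g : (Fin n → X) → ℂ) :
    ∫ y : Fin n → X, g (fun i => y (τ i)) ∂(Measure.pi fun _ => μ) =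
    ∫ y : Fin n → X, g y ∂(Measure.pi fun _ => μ) := by
  have hEfun : ∀ y : Fin n → X,
      (MeasurableEquiv.piCongrLeft (fun _ : Fin n => X) τ.symm) y = fun i => y (τ i) := by
    intro y
    funext i
    rw [MeasurableEquiv.coe_piCongrLeft]
    simpa using Equiv.piCongrLeft_apply_apply (fun _ : Fin n => X) τ.symm y (τ i)
  have h := (MeasureTheory.measurePreserving_piCongrLeft (fun _ : Fin n => μ) τ.symm).integral_comp' g
  calc ∫ y : Fin n → X, g (fun i => y (τ i)) ∂(Measure.pi fun _ => μ)
      = ∫ y : Fin n → X, g ((MeasurableEquiv.piCongrLeft (fun _ : Fin n => X) τ.symm) y)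
          ∂(Measure.pi fun _ => μ) := by
        congr 1
        funext y
        rw [hEfun y]
    _ = ∫ y : Fin n → X, g y ∂(Measure.pi fun _ => μ) := h

private lemma stmt8_det {X : Type*} [MeasurableSpace X] (μ : Measure X) [IsFiniteMeasure μ]
    (N : ℕ) (hN : 1 ≤ N) (f : Fin N → X → ℂ)
    (hmeas : ∀ i, Measurable (f i)) (hfb : ∀ i, ∃ C, ∀ x, ‖f i x‖ ≤ C)
    (φ v : X → ℝ) (hφm : Measurable φ) (hvm : Measurable v)
    (hφb : ∃ C, ∀ x, |φ x| ≤ C) (hvb : ∃ C, ∀ x, |v x| ≤ C) :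
    (∀ t : ℝ, ((N.factorial : ℝ) : ℂ) * (Matrix.of fun i j =>
        ∫ x, f i x * (starRingEnd ℂ) (f j x) *
          (Real.exp (-2 * (φ x + t * v x)) : ℂ) ∂μ).det =
      ((∫ y : Fin N → X, ‖(Matrix.of fun i j => f i (y j)).det‖ ^ 2 *
          ∏ i, Real.exp (-2 * (φ (y i) + t * v (y i))) ∂(Measure.pi fun _ => μ) : ℝ) : ℂ)) ∧
    (∀ t : ℝ, Integrable (fun y : Fin N → X => ‖(Matrix.of fun i j => f i (y j)).det‖ ^ 2 *
          ∏ i, Real.exp (-2 * (φ (y i) + t * v (y i)))) (Measure.pi fun _ => μ)) := by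
  letI : MeasureSpace X := ⟨μ⟩
  choose Cf hCf using hfb
  obtain ⟨Cφ, hCφ⟩ := hφb
  obtain ⟨Cv, hCv⟩ := hvb
  set C : ℝ := 1 + ∑ i, |Cf i| with hCdef
  have hC : ∀ i x, ‖f i x‖ ≤ C := by
    intro i x
    have h2 : Cf i ≤ ∑ j, |Cf j| :=
      le_trans (le_abs_self _) (Finset.single_le_sum (f := fun j => |Cf j|)
        (fun j _ => abs_nonneg _) (Finset.mem_univ i))
    have h1 : ‖f i x‖ ≤ Cf i := hCf i x
    rw [hCdef]; linarith
  have hC0 : (0:ℝ) ≤ C := by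
    rw [hCdef]
    positivity
  have hw_le : ∀ (t : ℝ) (x : X),
      Real.exp (-2 * (φ x + t * v x)) ≤ Real.exp (2 * Cφ + |t| * Cv * 2) := by
    intro t x
    apply Real.exp_le_exp.2
    have h1 := abs_le.1 (hCφ x)
    have h2 : |t * v x| ≤ |t| * Cv := by
      rw [abs_mul]; exact mul_le_mul_of_nonneg_left (hCv x) (abs_nonneg t)
    have h4 := abs_le.1 h2
    nlinarith
  have hw_meas : ∀ t : ℝ, Measurable (fun x => Real.exp (-2 * (φ x + t * v x))) := fun t =>
    ((hφm.add (hvm.const_mul t)).const_mul (-2)).exp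
  have hg_meas : ∀ (t : ℝ) (i j : Fin N), Measurable (fun x =>
      f i x * (starRingEnd ℂ) (f j x) * ((Real.exp (-2 * (φ x + t * v x)) : ℝ) : ℂ)) := by
    intro t i j
    exact ((hmeas i).mul ((Complex.continuous_conj.measurable).comp (hmeas j))).mul
      (Complex.measurable_ofReal.comp (hw_meas t))
  have hg_int : ∀ (t : ℝ) (i j : Fin N), Integrable (fun x =>
      f i x * (starRingEnd ℂ) (f j x) * ((Real.exp (-2 * (φ x + t * v x)) : ℝ) : ℂ)) μ := by
    intro t i j
    refine integrable_bdd' (hg_meas t i j).aestronglyMeasurable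
      (C := C * C * Real.exp (2 * Cφ + |t| * Cv * 2)) fun x => ?_
    have h0 : ‖((Real.exp (-2 * (φ x + t * v x)) : ℝ) : ℂ)‖ ≤
        Real.exp (2 * Cφ + |t| * Cv * 2) := by
      rw [Complex.norm_real, Real.norm_eq_abs, abs_of_pos (Real.exp_pos _)]
      exact hw_le t x
    calc ‖f i x * (starRingEnd ℂ) (f j x) * ((Real.exp (-2 * (φ x + t * v x)) : ℝ) : ℂ)‖
        = ‖f i x‖ * ‖f j x‖ * ‖((Real.exp (-2 * (φ x + t * v x)) : ℝ) : ℂ)‖ := by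
          rw [norm_mul, norm_mul, RCLike.norm_conj]
      _ ≤ C * C * Real.exp (2 * Cφ + |t| * Cv * 2) :=
          mul_le_mul (mul_le_mul (hC i x) (hC j x) (norm_nonneg _) hC0) h0 (norm_nonneg _)
            (mul_nonneg hC0 hC0)
  have hε : ∀ σ : Equiv.Perm (Fin N), ‖((Equiv.Perm.sign σ : ℤ) : ℂ)‖ = 1 := by
    intro σ
    rcases Int.units_eq_one_or (Equiv.Perm.sign σ) with h | h <;> simp [h]
  have hDm : Measurable (fun y : Fin N → X => (Matrix.of fun i j => f i (y j)).det) := by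
    simp_rw [Matrix.det_apply']
    exact Finset.measurable_sum _ fun σ _ => ((Finset.measurable_prod _ fun i _ =>
      ((hmeas (σ i)).comp (measurable_pi_apply i))).const_mul _)
  have hDb : ∀ y : Fin N → X, ‖(Matrix.of fun i j => f i (y j)).det‖ ≤
      (N.factorial : ℝ) * C ^ N := by
    intro y
    rw [Matrix.det_apply']
    refine le_trans (norm_sum_le _ _) ?_
    have hterm : ∀ σ : Equiv.Perm (Fin N),
        ‖((Equiv.Perm.sign σ : ℤ) : ℂ) * ∏ i, (Matrix.of fun i j => f i (y j)) (σ i) i‖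
          ≤ C ^ N := by
      intro σ
      rw [norm_mul, hε σ, one_mul, norm_prod]
      calc ∏ i, ‖(Matrix.of fun i j => f i (y j)) (σ i) i‖ ≤ ∏ _i : Fin N, C :=
            Finset.prod_le_prod (fun i _ => norm_nonneg _) (fun i _ => hC (σ i) (y i))
        _ = C ^ N := by rw [Finset.prod_const, Finset.card_univ, Fintype.card_fin]
    calc ∑ σ : Equiv.Perm (Fin N),
          ‖((Equiv.Perm.sign σ : ℤ) : ℂ) * ∏ i, (Matrix.of fun i j => f i (y j)) (σ i) i‖
        ≤ ∑ _σ : Equiv.Perm (Fin N), C ^ N := Finset.sum_le_sum fun σ _ => hterm σ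
      _ = (N.factorial : ℝ) * C ^ N := by
          rw [Finset.sum_const, Finset.card_univ, Fintype.card_perm, Fintype.card_fin,
            nsmul_eq_mul]
  have hWm : ∀ t : ℝ, Measurable (fun y : Fin N → X =>
      ∏ i, Real.exp (-2 * (φ (y i) + t * v (y i)))) := fun t =>
    Finset.measurable_prod _ fun i _ => (hw_meas t).comp (measurable_pi_apply i)
  have hW_pos : ∀ (t : ℝ) (y : Fin N → X), 0 < ∏ i, Real.exp (-2 * (φ (y i) + t * v (y i))) :=
    fun t y => Finset.prod_pos fun i _ => Real.exp_pos _
  have hWb : ∀ (t : ℝ) (y : Fin N → X), ∏ i, Real.exp (-2 * (φ (y i) + t * v (y i))) ≤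
      Real.exp (2 * Cφ + |t| * Cv * 2) ^ N := by
    intro t y
    calc ∏ i, Real.exp (-2 * (φ (y i) + t * v (y i)))
        ≤ ∏ _i : Fin N, Real.exp (2 * Cφ + |t| * Cv * 2) :=
          Finset.prod_le_prod (fun i _ => (Real.exp_pos _).le) (fun i _ => hw_le t (y i))
      _ = _ := by rw [Finset.prod_const, Finset.card_univ, Fintype.card_fin]
  have hbig_int : ∀ (t : ℝ) (τ : Equiv.Perm (Fin N)), Integrable
      (fun y : Fin N → X => (Matrix.of fun i j => f i (y j)).det *
        (starRingEnd ℂ) (∏ i, f i (y (τ i))) *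
        ((∏ i, Real.exp (-2 * (φ (y i) + t * v (y i))) : ℝ) : ℂ))
      (Measure.pi fun _ => μ) := by
    intro t τ
    have hm : Measurable (fun y : Fin N → X => (Matrix.of fun i j => f i (y j)).det *
        (starRingEnd ℂ) (∏ i, f i (y (τ i))) *
        ((∏ i, Real.exp (-2 * (φ (y i) + t * v (y i))) : ℝ) : ℂ)) :=
      (hDm.mul (Complex.continuous_conj.measurable.comp
        (Finset.measurable_prod _ fun i _ => (hmeas i).comp (measurable_pi_apply (τ i))))).mul
        (Complex.measurable_ofReal.comp (hWm t))
    refine integrable_bdd' hm.aestronglyMeasurable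
      (C := ((N.factorial : ℝ) * C ^ N) * C ^ N * Real.exp (2 * Cφ + |t| * Cv * 2) ^ N)
      fun y => ?_
    rw [norm_mul, norm_mul, RCLike.norm_conj]
    have h1 : ‖∏ i, f i (y (τ i))‖ ≤ C ^ N := by
      rw [norm_prod]
      calc ∏ i, ‖f i (y (τ i))‖ ≤ ∏ _i : Fin N, C :=
            Finset.prod_le_prod (fun i _ => norm_nonneg _) (fun i _ => hC i (y (τ i)))
        _ = C ^ N := by rw [Finset.prod_const, Finset.card_univ, Fintype.card_fin]
    have h2 : ‖((∏ i, Real.exp (-2 * (φ (y i) + t * v (y i))) : ℝ) : ℂ)‖ ≤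
        Real.exp (2 * Cφ + |t| * Cv * 2) ^ N := by
      rw [Complex.norm_real, Real.norm_eq_abs, abs_of_pos (hW_pos t y)]
      exact hWb t y
    have hnn1 : (0:ℝ) ≤ (N.factorial : ℝ) * C ^ N :=
      mul_nonneg (Nat.cast_nonneg _) (pow_nonneg hC0 N)
    exact mul_le_mul (mul_le_mul (hDb y) h1 (norm_nonneg _) hnn1) h2 (norm_nonneg _)
      (mul_nonneg hnn1 (pow_nonneg hC0 N))
  constructor
  · intro t
    -- Step E : det as a single integral over the product space
    have hdet_int : (Matrix.of fun i j =>
        ∫ x, f i x * (starRingEnd ℂ) (f j x) *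
          ((Real.exp (-2 * (φ x + t * v x)) : ℝ) : ℂ) ∂μ).det =
        ∫ y : Fin N → X, (Matrix.of fun i j => f i (y j)).det *
          (starRingEnd ℂ) (∏ i, f i (y i)) *
          ((∏ i, Real.exp (-2 * (φ (y i) + t * v (y i))) : ℝ) : ℂ)
          ∂(Measure.pi fun _ => μ) := by
      rw [Matrix.det_apply']
      have h1 : ∀ σ : Equiv.Perm (Fin N),
          (∏ i, (Matrix.of fun i j => ∫ x, f i x * (starRingEnd ℂ) (f j x) *
            ((Real.exp (-2 * (φ x + t * v x)) : ℝ) : ℂ) ∂μ) (σ i) i) =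
          ∫ y : Fin N → X, ∏ i, (f (σ i) (y i) * (starRingEnd ℂ) (f i (y i)) *
            ((Real.exp (-2 * (φ (y i) + t * v (y i))) : ℝ) : ℂ)) ∂(Measure.pi fun _ => μ) := by
        intro σ
        exact (MeasureTheory.integral_fintype_prod_eq_prod (ι := Fin N)
          (fun i x => f (σ i) x * (starRingEnd ℂ) (f i x) *
            ((Real.exp (-2 * (φ x + t * v x)) : ℝ) : ℂ))).symm
      simp_rw [h1, ← integral_const_mul]
      rw [← integral_finset_sum]
      · congr 1
        funext y
        have hexp : ∀ σ : Equiv.Perm (Fin N),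
            (∏ i, (f (σ i) (y i) * (starRingEnd ℂ) (f i (y i)) *
              ((Real.exp (-2 * (φ (y i) + t * v (y i))) : ℝ) : ℂ))) =
            (∏ i, f (σ i) (y i)) * ((starRingEnd ℂ) (∏ i, f i (y i)) *
              ((∏ i, Real.exp (-2 * (φ (y i) + t * v (y i))) : ℝ) : ℂ)) := by
          intro σ
          rw [Finset.prod_mul_distrib, Finset.prod_mul_distrib, ← map_prod,
            Complex.ofReal_prod, mul_assoc]
        simp_rw [hexp]
        rw [Matrix.det_apply', Finset.sum_mul, Finset.sum_mul]
        refine Finset.sum_congr rfl fun σ _ => ?_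
        simp only [Matrix.of_apply]
        ring
      · intro σ _
        exact ((Integrable.fintype_prod (f := fun i x => f (σ i) x * (starRingEnd ℂ) (f i x) *
          ((Real.exp (-2 * (φ x + t * v x)) : ℝ) : ℂ)) (fun i => hg_int t (σ i) i)).const_mul _)
    -- Step F/G : symmetrization per permutation
    have hperm : ∀ τ : Equiv.Perm (Fin N),
        (∫ y : Fin N → X, (Matrix.of fun i j => f i (y j)).det *
          (starRingEnd ℂ) (∏ i, f i (y i)) *
          ((∏ i, Real.exp (-2 * (φ (y i) + t * v (y i))) : ℝ) : ℂ)
          ∂(Measure.pi fun _ => μ)) =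
        ((Equiv.Perm.sign τ : ℤ) : ℂ) *
          ∫ y : Fin N → X, (Matrix.of fun i j => f i (y j)).det *
            (starRingEnd ℂ) (∏ i, f i (y (τ i))) *
            ((∏ i, Real.exp (-2 * (φ (y i) + t * v (y i))) : ℝ) : ℂ)
            ∂(Measure.pi fun _ => μ) := by
      intro τ
      rw [← integral_perm_comp μ τ (fun y : Fin N → X =>
        (Matrix.of fun i j => f i (y j)).det * (starRingEnd ℂ) (∏ i, f i (y i)) *
          ((∏ i, Real.exp (-2 * (φ (y i) + t * v (y i))) : ℝ) : ℂ))]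
      rw [← integral_const_mul]
      congr 1
      funext y
      show (Matrix.of fun i j => f i (y (τ j))).det *
          (starRingEnd ℂ) (∏ i, f i (y (τ i))) *
          ((∏ i, Real.exp (-2 * (φ (y (τ i)) + t * v (y (τ i)))) : ℝ) : ℂ) = _
      have hDτ : (Matrix.of fun i j => f i (y (τ j))).det =
          ((Equiv.Perm.sign τ : ℤ) : ℂ) * (Matrix.of fun i j => f i (y j)).det := by
        have h3 : (Matrix.of fun i j => f i (y (τ j))) =
            (Matrix.of fun i j => f i (y j)).submatrix id τ := by
          ext i j
          simp [Matrix.submatrix_apply]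
        rw [h3, Matrix.det_permute']
      have hWτ : (∏ i, Real.exp (-2 * (φ (y (τ i)) + t * v (y (τ i))))) =
          ∏ i, Real.exp (-2 * (φ (y i) + t * v (y i))) :=
        Equiv.prod_comp τ (fun i => Real.exp (-2 * (φ (y i) + t * v (y i))))
      rw [hDτ, hWτ]
      ring
    -- Step H : sum over all permutations
    have hcard : ((N.factorial : ℝ) : ℂ) *
        (∫ y : Fin N → X, (Matrix.of fun i j => f i (y j)).det *
          (starRingEnd ℂ) (∏ i, f i (y i)) *
          ((∏ i, Real.exp (-2 * (φ (y i) + t * v (y i))) : ℝ) : ℂ)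
          ∂(Measure.pi fun _ => μ)) =
        ∑ τ : Equiv.Perm (Fin N), ((Equiv.Perm.sign τ : ℤ) : ℂ) *
          ∫ y : Fin N → X, (Matrix.of fun i j => f i (y j)).det *
            (starRingEnd ℂ) (∏ i, f i (y (τ i))) *
            ((∏ i, Real.exp (-2 * (φ (y i) + t * v (y i))) : ℝ) : ℂ)
            ∂(Measure.pi fun _ => μ) := by
      rw [Finset.sum_congr rfl (fun τ _ => (hperm τ).symm), Finset.sum_const,
        Finset.card_univ, Fintype.card_perm, Fintype.card_fin, nsmul_eq_mul]
      push_cast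
      ring
    rw [hdet_int, hcard]
    simp_rw [← integral_const_mul]
    rw [← integral_finset_sum _ (fun τ _ => ((hbig_int t τ).const_mul _))]
    rw [show ((∫ y : Fin N → X, ‖(Matrix.of fun i j => f i (y j)).det‖ ^ 2 *
        ∏ i, Real.exp (-2 * (φ (y i) + t * v (y i))) ∂(Measure.pi fun _ => μ) : ℝ) : ℂ) =
        ∫ y : Fin N → X, ((‖(Matrix.of fun i j => f i (y j)).det‖ ^ 2 *
          ∏ i, Real.exp (-2 * (φ (y i) + t * v (y i))) : ℝ) : ℂ) ∂(Measure.pi fun _ => μ)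
        from (integral_ofReal).symm]
    congr 1
    funext y
    have hDsum : ∑ τ : Equiv.Perm (Fin N),
        ((Equiv.Perm.sign τ : ℤ) : ℂ) * ∏ i, f i (y (τ i)) =
        (Matrix.of fun i j => f i (y j)).det := by
      rw [← Matrix.det_transpose (Matrix.of fun i j => f i (y j)), Matrix.det_apply']
      exact Finset.sum_congr rfl fun τ _ => rfl
    calc ∑ τ : Equiv.Perm (Fin N), ((Equiv.Perm.sign τ : ℤ) : ℂ) *
          ((Matrix.of fun i j => f i (y j)).det *
            (starRingEnd ℂ) (∏ i, f i (y (τ i))) *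
            ((∏ i, Real.exp (-2 * (φ (y i) + t * v (y i))) : ℝ) : ℂ))
        = (Matrix.of fun i j => f i (y j)).det *
            (starRingEnd ℂ) (∑ τ : Equiv.Perm (Fin N),
              ((Equiv.Perm.sign τ : ℤ) : ℂ) * ∏ i, f i (y (τ i))) *
            ((∏ i, Real.exp (-2 * (φ (y i) + t * v (y i))) : ℝ) : ℂ) := by
          rw [map_sum, Finset.mul_sum, Finset.sum_mul]
          refine Finset.sum_congr rfl fun τ _ => ?_
          rw [_root_.map_mul, map_intCast]
          ring
      _ = (Matrix.of fun i j => f i (y j)).det *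
            (starRingEnd ℂ) ((Matrix.of fun i j => f i (y j)).det) *
            ((∏ i, Real.exp (-2 * (φ (y i) + t * v (y i))) : ℝ) : ℂ) := by rw [hDsum]
      _ = ((‖(Matrix.of fun i j => f i (y j)).det‖ ^ 2 *
            ∏ i, Real.exp (-2 * (φ (y i) + t * v (y i))) : ℝ) : ℂ) := by
          rw [Complex.mul_conj, Complex.ofReal_mul]
          congr 2
          rw [Complex.normSq_eq_norm_sq]
  · intro t
    have hm2 : Measurable (fun y : Fin N → X => ‖(Matrix.of fun i j => f i (y j)).det‖ ^ 2 *
        ∏ i, Real.exp (-2 * (φ (y i) + t * v (y i)))) :=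
      (hDm.norm.pow_const 2).mul (hWm t)
    refine integrable_bdd' hm2.aestronglyMeasurable
      (C := ((N.factorial : ℝ) * C ^ N) ^ 2 * Real.exp (2 * Cφ + |t| * Cv * 2) ^ N) fun y => ?_
    rw [Real.norm_eq_abs, abs_mul, abs_of_nonneg (sq_nonneg _), abs_of_pos (hW_pos t y)]
    have h1 : ‖(Matrix.of fun i j => f i (y j)).det‖ ^ 2 ≤ ((N.factorial : ℝ) * C ^ N) ^ 2 :=
      pow_le_pow_left₀ (norm_nonneg _) (hDb y) 2
    have h2 := hWb t y
    have h3 := (hW_pos t y).le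
    nlinarith [sq_nonneg (‖(Matrix.of fun i j => f i (y j)).det‖),
      Real.exp_pos (2 * Cφ + |t| * Cv * 2)]
end DetPart

/-- Positivity of the weighted Gram determinant and convexity of its logarithm
along affine paths of weights `φ + t v`. -/
theorem stmt_8 {X : Type*} [MeasurableSpace X] (μ : Measure X) [IsFiniteMeasure μ]
    (N : ℕ) (hN : 1 ≤ N) (f : Fin N → X → ℂ)
    (hmeas : ∀ i, Measurable (f i)) (hfb : ∀ i, ∃ C, ∀ x, ‖f i x‖ ≤ C)
    (φ v : X → ℝ) (hφm : Measurable φ) (hvm : Measurable v)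
    (hφb : ∃ C, ∀ x, |φ x| ≤ C) (hvb : ∃ C, ∀ x, |v x| ≤ C)
    (hind : ∀ a : Fin N → ℂ, (∀ᵐ x ∂μ, ∑ i, a i * f i x = 0) → a = 0) :
    (∀ t : ℝ, 0 < ((Matrix.of fun i j =>
        ∫ x, f i x * (starRingEnd ℂ) (f j x) *
          (Real.exp (-2 * (φ x + t * v x)) : ℂ) ∂μ).det).re) ∧
      ConvexOn ℝ Set.univ (fun t : ℝ => Real.log ((Matrix.of fun i j =>
        ∫ x, f i x * (starRingEnd ℂ) (f j x) *
          (Real.exp (-2 * (φ x + t * v x)) : ℂ) ∂μ).det).re) := by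
  have hpos := stmt8_pos μ N hN f hmeas hfb φ v hφm hvm hφb hvb hind
  obtain ⟨hdet, hint⟩ := stmt8_det μ N hN f hmeas hfb φ v hφm hvm hφb hvb
  refine ⟨hpos, ?_⟩
  have hfact : (0:ℝ) < N.factorial := Nat.cast_pos.2 N.factorial_pos
  have hre : ∀ t : ℝ, ((Matrix.of fun i j =>
      ∫ x, f i x * (starRingEnd ℂ) (f j x) *
        (Real.exp (-2 * (φ x + t * v x)) : ℂ) ∂μ).det).re =
      (N.factorial : ℝ)⁻¹ * ∫ y : Fin N → X, ‖(Matrix.of fun i j => f i (y j)).det‖ ^ 2 *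
        ∏ i, Real.exp (-2 * (φ (y i) + t * v (y i))) ∂(Measure.pi fun _ => μ) := by
    intro t
    have h := congrArg Complex.re (hdet t)
    rw [Complex.re_ofReal_mul, Complex.ofReal_re] at h
    rw [← h, inv_mul_cancel_left₀ hfact.ne']
  have hIpos : ∀ t : ℝ, 0 < ∫ y : Fin N → X, ‖(Matrix.of fun i j => f i (y j)).det‖ ^ 2 *
      ∏ i, Real.exp (-2 * (φ (y i) + t * v (y i))) ∂(Measure.pi fun _ => μ) := by
    intro t
    have h1 := hpos t
    rw [hre t] at h1
    have h2 := mul_pos hfact h1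
    rwa [← mul_assoc, mul_inv_cancel₀ hfact.ne', one_mul] at h2
  set h0 : (Fin N → X) → ℝ := fun y =>
    ‖(Matrix.of fun i j => f i (y j)).det‖ ^ 2 * Real.exp ((-2) * ∑ i, φ (y i)) with hh0def
  set V0 : (Fin N → X) → ℝ := fun y => (-2) * ∑ i, v (y i) with hV0def
  have hfun_eq : ∀ t : ℝ, (fun y : Fin N → X => h0 y * Real.exp (t * V0 y)) =
      (fun y : Fin N → X => ‖(Matrix.of fun i j => f i (y j)).det‖ ^ 2 *
        ∏ i, Real.exp (-2 * (φ (y i) + t * v (y i)))) := by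
    intro t
    funext y
    rw [hh0def, hV0def]
    have hsum : ∑ i, (-2 * (φ (y i) + t * v (y i))) =
        (-2) * ∑ i, φ (y i) + t * ((-2) * ∑ i, v (y i)) := by
      rw [Finset.mul_sum, Finset.mul_sum, Finset.mul_sum, ← Finset.sum_add_distrib]
      exact Finset.sum_congr rfl fun i _ => by ring
    rw [mul_assoc, ← Real.exp_add, ← hsum, Real.exp_sum]
  have hh : ∀ y : Fin N → X, 0 ≤ h0 y := fun y =>
    mul_nonneg (sq_nonneg _) (Real.exp_pos _).le
  have hm : ∀ t : ℝ, AEMeasurable (fun y : Fin N → X => h0 y * Real.exp (t * V0 y))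
      (Measure.pi fun _ => μ) := by
    intro t
    rw [hfun_eq t]
    exact (hint t).aemeasurable
  have hintt : ∀ t : ℝ, Integrable (fun y : Fin N → X => h0 y * Real.exp (t * V0 y))
      (Measure.pi fun _ => μ) := by
    intro t
    rw [hfun_eq t]
    exact hint t
  have hpost : ∀ t : ℝ, 0 < ∫ y : Fin N → X, h0 y * Real.exp (t * V0 y)
      ∂(Measure.pi fun _ => μ) := by
    intro t
    rw [hfun_eq t]
    exact hIpos t
  have hconvI := logConvexAux hh hm hintt hpost
  have hfinal : (fun t : ℝ => Real.log ((Matrix.of fun i j =>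
      ∫ x, f i x * (starRingEnd ℂ) (f j x) *
        (Real.exp (-2 * (φ x + t * v x)) : ℂ) ∂μ).det).re) =
      fun t : ℝ => Real.log ((N.factorial : ℝ)⁻¹) +
        Real.log (∫ y : Fin N → X, h0 y * Real.exp (t * V0 y) ∂(Measure.pi fun _ => μ)) := by
    funext t
    rw [hre t, ← hfun_eq t, Real.log_mul (inv_pos.2 hfact).ne' (hpost t).ne']
  rw [hfinal]
  exact (convexOn_const _ convex_univ).add hconvI
end

section
/- Let μ and ν be finite measures on a measurable space X, and let f_1, …, f_N : X → ℂ be bounded measurable functions that are orthonormal in L²(μ), i.e. ∫_X f_i · conj(f_j) dμ = δ_{ij}. For t ∈ [0,1] let μ_t = (1-t)μ + tν and let G(μ_t) be the Gram matrix of the f_i with respect to μ_t. Then the function t ↦ log det G(μ_t) has right derivative at t = 0 equal to ∫_X (∑_{i=1}^N |f_i(x)|²) dν(x) − N. -/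
open MeasureTheory

/-- The right derivative at `t = 0` of `t ↦ log det G(μ_t)` along the segment of
measures `μ_t = (1-t)μ + tν`, for a family orthonormal in `L²(μ)`, equals
`∫ ρ dν − N` where `ρ = ∑ |f i|²` is the Bergman distortion function of `μ`. -/
theorem stmt_10 {X : Type*} [MeasurableSpace X]
    (μ ν : Measure X) [IsFiniteMeasure μ] [IsFiniteMeasure ν]
    (N : ℕ) (hN : 1 ≤ N) (f : Fin N → X → ℂ)
    (hmeas : ∀ i, Measurable (f i)) (hfb : ∀ i, ∃ C, ∀ x, ‖f i x‖ ≤ C)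
    (horth : ∀ i j, ∫ x, f i x * (starRingEnd ℂ) (f j x) ∂μ = if i = j then 1 else 0) :
    HasDerivWithinAt (fun t : ℝ => Real.log ((Matrix.of fun i j =>
        ∫ x, f i x * (starRingEnd ℂ) (f j x)
          ∂(ENNReal.ofReal (1 - t) • μ + ENNReal.ofReal t • ν)).det).re)
      ((∫ x, (∑ i, ‖f i x‖ ^ 2) ∂ν) - N) (Set.Ici 0) 0 := by
  have hint : ∀ (κ : Measure X) [IsFiniteMeasure κ] (i j : Fin N),
      Integrable (fun x => f i x * (starRingEnd ℂ) (f j x)) κ := by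
    intro κ _ i j
    obtain ⟨Ci, hCi⟩ := hfb i
    obtain ⟨Cj, hCj⟩ := hfb j
    refine ⟨((hmeas i).mul ((RCLike.conjCLE (K := ℂ)).continuous.measurable.comp (hmeas j))).aestronglyMeasurable, ?_⟩
    refine HasFiniteIntegral.of_bounded (C := Ci * Cj) (ae_of_all _ fun x => ?_)
    have h0 : (0:ℝ) ≤ ‖f i x‖ := norm_nonneg _
    simp only [norm_mul]
    calc ‖f i x‖ * ‖(starRingEnd ℂ) (f j x)‖
        = ‖f i x‖ * ‖f j x‖ := by rw [Complex.norm_conj]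
      _ ≤ Ci * Cj := mul_le_mul (hCi x) (hCj x) (norm_nonneg _) ((h0.trans (hCi x)))
  set A : Matrix (Fin N) (Fin N) ℂ :=
    Matrix.of fun i j => ∫ x, f i x * (starRingEnd ℂ) (f j x) ∂ν with hA
  set B : Matrix (Fin N) (Fin N) ℂ := A - 1 with hB
  have hentry : ∀ t : ℝ, 0 ≤ t → t ≤ 1 → ∀ i j,
      (∫ x, f i x * (starRingEnd ℂ) (f j x)
          ∂(ENNReal.ofReal (1 - t) • μ + ENNReal.ofReal t • ν))
        = (1 - t) * (if i = j then 1 else 0) + t * A i j := by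
    intro t ht ht1 i j
    rw [integral_add_measure ((hint μ i j).smul_measure ENNReal.ofReal_lt_top.ne)
          ((hint ν i j).smul_measure ENNReal.ofReal_lt_top.ne),
        integral_smul_measure, integral_smul_measure,
        ENNReal.toReal_ofReal (by linarith), ENNReal.toReal_ofReal ht, horth i j]
    simp [hA, Matrix.of_apply]
  -- matrix identity
  have hmat : ∀ t : ℝ, 0 ≤ t → t ≤ 1 →
      (Matrix.of fun i j => ∫ x, f i x * (starRingEnd ℂ) (f j x)
          ∂(ENNReal.ofReal (1 - t) • μ + ENNReal.ofReal t • ν)) = 1 + ((t : ℝ) : ℂ) • B := by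
    intro t ht ht1
    ext i j
    rw [Matrix.of_apply, hentry t ht ht1]
    simp only [hB, Matrix.add_apply, Matrix.smul_apply, Matrix.sub_apply, Matrix.one_apply,
      smul_eq_mul]
    split_ifs <;> push_cast <;> ring
  obtain ⟨Q, hdet⟩ : ∃ Q : Polynomial ℂ, ∀ t : ℝ,
      ((1 : Matrix (Fin N) (Fin N) ℂ) + ((t:ℝ):ℂ) • B).det
        = 1 + B.trace * t + Q.eval ((t:ℝ):ℂ) * ((t:ℝ):ℂ) ^ 2 :=
    ⟨_, fun t => Matrix.det_one_add_smul ((t:ℝ):ℂ) B⟩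
  -- pointwise description of the function on [0,1]
  have heq : ∀ t : ℝ, 0 ≤ t → t ≤ 1 →
      Real.log ((Matrix.of fun i j => ∫ x, f i x * (starRingEnd ℂ) (f j x)
          ∂(ENNReal.ofReal (1 - t) • μ + ENNReal.ofReal t • ν)).det).re
      = Real.log (((1:ℂ) + B.trace * t + Q.eval ((t:ℝ):ℂ) * ((t:ℝ):ℂ) ^ 2).re) := by
    intro t ht ht1
    rw [hmat t ht ht1, hdet t]
  -- derivative of the polynomial model
  have hc : HasDerivAt (fun t : ℝ => ((t:ℝ):ℂ)) 1 0 := by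
    exact (hasDerivAt_id (0:ℝ)).ofReal_comp.congr_deriv Complex.ofReal_one
  have hQ : HasDerivAt (fun t : ℝ => Q.eval ((t:ℝ):ℂ)) (Q.derivative.eval 0) 0 := by
    have := (Q.hasDerivAt (((0:ℝ)):ℂ)).comp_ofReal
    simpa using this
  have h1 : HasDerivAt (fun t : ℝ => B.trace * ((t:ℝ):ℂ)) B.trace 0 := by
    simpa using hc.const_mul B.trace
  have h2 : HasDerivAt (fun t : ℝ => Q.eval ((t:ℝ):ℂ) * ((t:ℝ):ℂ) ^ 2) 0 0 := by
    have := hQ.mul (hc.mul hc)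
    rw [show (fun t : ℝ => Q.eval ((t:ℝ):ℂ) * ((t:ℝ):ℂ) ^ 2)
        = fun t : ℝ => Q.eval ((t:ℝ):ℂ) * (((t:ℝ):ℂ) * ((t:ℝ):ℂ)) from funext fun t => by ring]
    exact this.congr_deriv (by simp)
  have hh : HasDerivAt (fun t : ℝ => (1:ℂ) + B.trace * ((t:ℝ):ℂ) + Q.eval ((t:ℝ):ℂ) * ((t:ℝ):ℂ) ^ 2)
      B.trace 0 := by
    exact ((h1.const_add (1:ℂ)).add h2).congr_deriv (add_zero _)
  have hre : HasDerivAt (fun t : ℝ =>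
      ((1:ℂ) + B.trace * ((t:ℝ):ℂ) + Q.eval ((t:ℝ):ℂ) * ((t:ℝ):ℂ) ^ 2).re) B.trace.re 0 :=
    Complex.reCLM.hasFDerivAt.comp_hasDerivAt 0 hh
  have h0v : ((1:ℂ) + B.trace * ((0:ℝ):ℂ) + Q.eval (((0:ℝ)):ℂ) * (((0:ℝ)):ℂ) ^ 2).re = 1 := by
    simp
  have hlog : HasDerivAt (fun t : ℝ => Real.log
      (((1:ℂ) + B.trace * ((t:ℝ):ℂ) + Q.eval ((t:ℝ):ℂ) * ((t:ℝ):ℂ) ^ 2).re)) B.trace.re 0 := by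
    have := (Real.hasDerivAt_log (by rw [h0v]; norm_num)).comp 0 hre
    exact this.congr_deriv (by simp)
  -- identify the trace
  have hi2 : ∀ i : Fin N, Integrable (fun x => ‖f i x‖ ^ 2) ν := by
    intro i
    obtain ⟨Ci, hCi⟩ := hfb i
    refine ⟨(((hmeas i).norm).pow_const 2).aestronglyMeasurable, ?_⟩
    refine HasFiniteIntegral.of_bounded (C := Ci ^ 2) (ae_of_all _ fun x => ?_)
    have h0 : (0:ℝ) ≤ ‖f i x‖ := norm_nonneg _
    rw [Real.norm_eq_abs, abs_of_nonneg (pow_nonneg h0 2)]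
    exact pow_le_pow_left₀ h0 (hCi x) 2
  have hAd : ∀ i : Fin N, A i i = ((∫ x, ‖f i x‖ ^ 2 ∂ν : ℝ) : ℂ) := by
    intro i
    rw [hA]
    simp only [Matrix.of_apply]
    rw [show (fun x => f i x * (starRingEnd ℂ) (f i x))
        = fun x => ((‖f i x‖ ^ 2 : ℝ) : ℂ) from
      funext fun x => by rw [Complex.mul_conj, ← Complex.sq_norm]]
    exact integral_ofReal
  have htrB : B.trace.re = (∫ x, (∑ i, ‖f i x‖ ^ 2) ∂ν) - N := by
    have hAtr : A.trace = ((∫ x, (∑ i, ‖f i x‖ ^ 2) ∂ν : ℝ) : ℂ) := by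
      rw [Matrix.trace]
      simp only [Matrix.diag_apply, hAd]
      rw [← Complex.ofReal_sum, integral_finset_sum _ (fun i _ => hi2 i)]
    rw [hB, Matrix.trace_sub, Matrix.trace_one, hAtr]
    simp
  -- assemble
  have hev : (fun t : ℝ => Real.log ((Matrix.of fun i j =>
        ∫ x, f i x * (starRingEnd ℂ) (f j x)
          ∂(ENNReal.ofReal (1 - t) • μ + ENNReal.ofReal t • ν)).det).re)
      =ᶠ[nhdsWithin 0 (Set.Ici 0)] (fun t : ℝ => Real.log
      (((1:ℂ) + B.trace * ((t:ℝ):ℂ) + Q.eval ((t:ℝ):ℂ) * ((t:ℝ):ℂ) ^ 2).re)) := by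
    filter_upwards [self_mem_nhdsWithin,
      nhdsWithin_le_nhds (Iio_mem_nhds (by norm_num : (0:ℝ) < 1))] with t ht0 ht1
    exact heq t ht0 (le_of_lt ht1)
  refine HasDerivWithinAt.congr_of_eventuallyEq ?_ hev (heq 0 le_rfl zero_le_one)
  rw [← htrB]
  exact hlog.hasDerivWithinAt
end

section
/- Let K be a compact topological space, N ≥ 1, and let f_1, …, f_N : K → ℂ be continuous functions such that no nontrivial complex linear combination of them vanishes identically on K. Let μ be a Borel probability measure on K whose Gram matrix G(μ), with entries G(μ)_{ij} = ∫_K f_i · conj(f_j) dμ, is positive definite, and define the distortion function ρ_μ : K → ℝ by ρ_μ(x) = ⟨G(μ)^{-1} F(x), F(x)⟩ where F(x) = (f_1(x),…,f_N(x)) ∈ ℂ^N and ⟨·,·⟩ is the standard Hermitian inner product. Then μ maximizes ν ↦ det G(ν) over all Borel probability measures ν on K if and only if sup_{x∈K} ρ_μ(x) = N. Moreover in that case ρ_μ(x) = N for μ-almost every x. -/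
open MeasureTheory
open scoped ComplexOrder

/-- The Gram matrix of the functions `f i` with respect to a measure `ν`. -/
noncomputable def gramMatrix {K : Type*} [MeasurableSpace K] {N : ℕ}
    (f : Fin N → K → ℂ) (ν : Measure K) : Matrix (Fin N) (Fin N) ℂ :=
  Matrix.of fun i j => ∫ x, f i x * (starRingEnd ℂ) (f j x) ∂ν

/-- The Bergman distortion function `ρ_μ(x) = ⟨G(μ)⁻¹ F(x), F(x)⟩`,
where `F(x) = (f₁(x),…,f_N(x))`. -/
noncomputable def distortion {K : Type*} [MeasurableSpace K] {N : ℕ}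
    (f : Fin N → K → ℂ) (μ : Measure K) (x : K) : ℝ :=
  (dotProduct (star fun i => f i x)
    ((gramMatrix f μ)⁻¹.mulVec fun i => f i x)).re

set_option linter.unusedSectionVars false
set_option maxHeartbeats 1000000

section aux
variable {K : Type*} [TopologicalSpace K] [CompactSpace K]
    [MeasurableSpace K] [BorelSpace K] {N : ℕ}

lemma cont_integrable {E : Type*} [NormedAddCommGroup E]
    [TopologicalSpace.PseudoMetrizableSpace E] [SecondCountableTopology E]
    {g : K → E} (hg : Continuous g) (ν : Measure K) [IsFiniteMeasure ν] :
    Integrable g ν := by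
  rcases isEmpty_or_nonempty K with h | h
  · exact ⟨hg.aestronglyMeasurable, by simp [HasFiniteIntegral]⟩
  obtain ⟨C, hC⟩ := (isCompact_range (hg.norm)).bddAbove
  refine ⟨hg.aestronglyMeasurable, HasFiniteIntegral.of_bounded (C := C) ?_⟩
  exact ae_of_all _ fun x => hC ⟨x, rfl⟩

lemma entry_integrable {f : Fin N → K → ℂ} (hcont : ∀ i, Continuous (f i))
    (ν : Measure K) [IsFiniteMeasure ν] (i j : Fin N) :
    Integrable (fun x => f i x * (starRingEnd ℂ) (f j x)) ν :=
  cont_integrable ((hcont i).mul (Complex.continuous_conj.comp (hcont j))) ν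

lemma gram_isHermitian (f : Fin N → K → ℂ) (ν : Measure K) :
    (gramMatrix f ν).IsHermitian := by
  ext i j
  simp only [Matrix.conjTranspose_apply, gramMatrix, Matrix.of_apply, RCLike.star_def]
  rw [← integral_conj]
  congr 1; ext x
  simp [mul_comm]

lemma gram_posSemidef {f : Fin N → K → ℂ} (hcont : ∀ i, Continuous (f i))
    (ν : Measure K) [IsFiniteMeasure ν] :
    (gramMatrix f ν).PosSemidef := by
  refine Matrix.PosSemidef.of_dotProduct_mulVec_nonneg (gram_isHermitian f ν) fun a => ?_
  set g : K → ℝ := fun x => Complex.normSq (∑ j, a j * (starRingEnd ℂ) (f j x)) with hg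
  have key2 : ∫ x, ((g x : ℝ) : ℂ) ∂ν = ((∫ x, g x ∂ν : ℝ) : ℂ) := integral_ofReal
  have key : dotProduct (star a) ((gramMatrix f ν).mulVec a)
      = ∫ x, ((g x : ℝ) : ℂ) ∂ν := by
    simp only [dotProduct, Matrix.mulVec, gramMatrix, Matrix.of_apply, Pi.star_apply]
    have step : ∀ i, star (a i) * (∑ j, (∫ x, f i x * (starRingEnd ℂ) (f j x) ∂ν) * a j)
        = ∫ x, ∑ j, star (a i) * (f i x * (starRingEnd ℂ) (f j x) * a j) ∂ν := by
      intro i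
      rw [integral_finset_sum _ (fun j _ => (((entry_integrable hcont ν i j).mul_const _).const_mul _))]
      rw [Finset.mul_sum]
      refine Finset.sum_congr rfl fun j _ => ?_
      rw [← integral_mul_const, ← integral_const_mul]
    simp only [dotProduct, step]
    rw [← integral_finset_sum _ (fun i _ => integrable_finset_sum _
      (fun j _ => ((entry_integrable hcont ν i j).mul_const _).const_mul _))]
    refine integral_congr_ae (ae_of_all _ fun x => ?_)
    beta_reduce
    rw [← Complex.mul_conj, map_sum, Finset.sum_mul_sum]
    rw [Finset.sum_comm]
    refine Finset.sum_congr rfl fun i _ => Finset.sum_congr rfl fun j _ => ?_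
    simp only [map_mul, Complex.conj_conj, RCLike.star_def]
    ring
  rw [key, key2, Complex.zero_le_real]
  exact integral_nonneg fun x => Complex.normSq_nonneg _

lemma trace_mul_gram {f : Fin N → K → ℂ} (hcont : ∀ i, Continuous (f i))
    (B : Matrix (Fin N) (Fin N) ℂ) (ν : Measure K) [IsFiniteMeasure ν] :
    (B * gramMatrix f ν).trace
      = ∫ x, dotProduct (star fun i => f i x) (B.mulVec fun i => f i x) ∂ν := by
  simp only [Matrix.trace, Matrix.diag, Matrix.mul_apply, gramMatrix, Matrix.of_apply,
    dotProduct, Matrix.mulVec, Pi.star_apply]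
  have step : ∀ i j : Fin N, B i j * (∫ x, f j x * (starRingEnd ℂ) (f i x) ∂ν)
      = ∫ x, B i j * (f j x * (starRingEnd ℂ) (f i x)) ∂ν := by
    intro i j; rw [integral_const_mul]
  simp only [step]
  have step2 : ∀ i : Fin N, ∑ j, ∫ x, B i j * (f j x * (starRingEnd ℂ) (f i x)) ∂ν
      = ∫ x, ∑ j, B i j * (f j x * (starRingEnd ℂ) (f i x)) ∂ν :=
    fun i => (integral_finset_sum _ (fun j _ => (entry_integrable hcont ν j i).const_mul _)).symm
  simp only [step2]
  rw [← integral_finset_sum _ (fun i _ => integrable_finset_sum _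
    (fun j _ => (entry_integrable hcont ν j i).const_mul (B i j)))]
  refine integral_congr_ae (ae_of_all _ fun x => ?_)
  beta_reduce
  refine Finset.sum_congr rfl fun i _ => ?_
  rw [Finset.mul_sum]
  refine Finset.sum_congr rfl fun j _ => ?_
  simp only [RCLike.star_def]
  ring

/-- Gram matrix of the mixture (1-t)μ + t δ_x -/
lemma gram_mixture {f : Fin N → K → ℂ} (hcont : ∀ i, Continuous (f i))
    (μ : Measure K) [IsFiniteMeasure μ] (x : K) {t : ℝ} (ht0 : 0 ≤ t) (ht1 : t ≤ 1) :
    gramMatrix f (ENNReal.ofReal (1 - t) • μ + ENNReal.ofReal t • Measure.dirac x)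
      = ((1 - t : ℝ) : ℂ) • gramMatrix f μ
        + ((t : ℝ) : ℂ) • (Matrix.replicateCol Unit (fun i => f i x) * Matrix.replicateRow Unit (star fun i => f i x)) := by
  ext i j
  have hsm : StronglyMeasurable (fun y => f i y * (starRingEnd ℂ) (f j y)) :=
    ((hcont i).mul (Complex.continuous_conj.comp (hcont j))).stronglyMeasurable
  simp only [gramMatrix, Matrix.of_apply, Matrix.add_apply, Matrix.smul_apply,
    Matrix.mul_apply, Matrix.replicateCol_apply, Matrix.replicateRow_apply, Pi.star_apply, Finset.univ_unique,
    Finset.sum_singleton, smul_eq_mul]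
  rw [integral_add_measure ((entry_integrable hcont μ i j).smul_measure ENNReal.ofReal_ne_top)
    (((cont_integrable ((hcont i).mul (Complex.continuous_conj.comp (hcont j))) (Measure.dirac x))).smul_measure ENNReal.ofReal_ne_top)]
  rw [integral_smul_measure, integral_smul_measure, integral_dirac' _ _ hsm,
    ENNReal.toReal_ofReal (by linarith), ENNReal.toReal_ofReal ht0]
  simp [RCLike.star_def, Complex.real_smul]
end aux

lemma det_rank_one_update {N : ℕ} (G : Matrix (Fin N) (Fin N) ℂ) (hG : IsUnit G.det)
    (u : Fin N → ℂ) {t : ℂ} (ht : t ≠ 1) :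
    ((1 - t) • G + t • (Matrix.replicateCol Unit u * Matrix.replicateRow Unit (star u))).det
      = (1 - t) ^ N * G.det * (1 + t * (1 - t)⁻¹ * (dotProduct (star u) (G⁻¹.mulVec u))) := by
  have h1t : (1 - t) ≠ 0 := sub_ne_zero.mpr (Ne.symm ht)
  have hA : IsUnit ((1 - t) • G).det := by
    rw [Matrix.det_smul]
    exact (IsUnit.pow _ (isUnit_iff_ne_zero.mpr h1t)).mul hG
  have hcr : t • (Matrix.replicateCol Unit u * Matrix.replicateRow Unit (star u))
      = Matrix.replicateCol Unit (t • u) * Matrix.replicateRow Unit (star u) := by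
    rw [Matrix.replicateCol_smul, Matrix.smul_mul]
  letI : Invertible (1 - t) := invertibleOfNonzero h1t
  have hinv : ((1 - t) • G)⁻¹ = (1 - t)⁻¹ • G⁻¹ := by
    refine Matrix.inv_eq_right_inv ?_
    rw [Matrix.smul_mul, Matrix.mul_smul, Matrix.mul_nonsing_inv G hG, smul_smul,
      mul_inv_cancel₀ h1t, one_smul]
  rw [hcr, Matrix.det_add_replicateCol_mul_replicateRow hA, hinv,
    Matrix.det_unique (1 + Matrix.replicateRow Unit (star u) * ((1 - t)⁻¹ • G⁻¹) * Matrix.replicateCol Unit (t • u)),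
    Matrix.det_smul, Fintype.card_fin]
  congr 1
  simp only [Matrix.add_apply, Matrix.one_apply_eq]
  congr 1
  simp only [Matrix.mul_apply, Matrix.replicateRow_apply, Matrix.replicateCol_apply, Matrix.smul_apply,
    Finset.univ_unique, Finset.sum_singleton, dotProduct, Matrix.mulVec,
    Pi.star_apply, Pi.smul_apply, smul_eq_mul]
  simp only [Finset.sum_mul, Finset.mul_sum]
  rw [Finset.sum_comm]
  exact Finset.sum_congr rfl fun i _ => Finset.sum_congr rfl fun j _ => by ring

lemma herm_trace_eq {N : ℕ} {A : Matrix (Fin N) (Fin N) ℂ} (hA : A.IsHermitian) :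
    A.trace = ((∑ i, hA.eigenvalues i : ℝ) : ℂ) := by
  conv_lhs => rw [hA.spectral_theorem, Unitary.conjStarAlgAut_apply]
  rw [Matrix.trace_mul_cycle]
  have : (star (hA.eigenvectorUnitary : Matrix (Fin N) (Fin N) ℂ))
      * (hA.eigenvectorUnitary : Matrix (Fin N) (Fin N) ℂ) = 1 := by
    simpa using (unitary.star_mul_self hA.eigenvectorUnitary)
  rw [this, Matrix.one_mul, Matrix.trace_diagonal]
  push_cast
  rfl

lemma psd_det_re_le_one {N : ℕ} {C : Matrix (Fin N) (Fin N) ℂ} (hC : C.PosSemidef)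
    (h : C.trace.re ≤ N) : C.det.re ≤ 1 := by
  have hdet := hC.1.det_eq_prod_eigenvalues
  have htr := herm_trace_eq hC.1
  have hev : ∀ i, 0 ≤ hC.1.eigenvalues i := hC.eigenvalues_nonneg
  have hre : C.det.re = ∏ i, hC.1.eigenvalues i := by
    rw [hdet]; norm_cast
  have hsum : (∑ i, hC.1.eigenvalues i) ≤ N := by
    rw [htr] at h; simpa using h
  rw [hre]
  calc ∏ i, hC.1.eigenvalues i
      ≤ ∏ i, Real.exp (hC.1.eigenvalues i - 1) := by
        refine Finset.prod_le_prod (fun i _ => hev i) (fun i _ => ?_)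
        have := Real.add_one_le_exp (hC.1.eigenvalues i - 1)
        linarith
    _ = Real.exp (∑ i, (hC.1.eigenvalues i - 1)) := (Real.exp_sum _ _).symm
    _ ≤ 1 := by
        rw [Real.exp_le_one_iff, Finset.sum_sub_distrib]
        simp only [Finset.sum_const, Finset.card_univ, Fintype.card_fin, nsmul_eq_mul, mul_one]
        linarith

lemma herm_dot_real {N : ℕ} {B : Matrix (Fin N) (Fin N) ℂ} (hB : B.IsHermitian)
    (u : Fin N → ℂ) :
    (((dotProduct (star u) (B.mulVec u)).re : ℝ) : ℂ)
      = dotProduct (star u) (B.mulVec u) := by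
  rw [Complex.conj_eq_iff_re.mp ?_]
  simp only [dotProduct, Matrix.mulVec, Pi.star_apply, map_sum, map_mul,
    Complex.conj_conj, RCLike.star_def, Finset.mul_sum]
  rw [Finset.sum_comm]
  refine Finset.sum_congr rfl fun i _ => Finset.sum_congr rfl fun j _ => ?_
  rw [← hB.apply j i]
  simp only [RCLike.star_def, Complex.conj_conj]
  ring

section main
variable {K : Type*} [TopologicalSpace K] [CompactSpace K]
    [MeasurableSpace K] [BorelSpace K] {N : ℕ}

/-- the complex-valued distortion -/
noncomputable def cfun (f : Fin N → K → ℂ) (μ : Measure K) (x : K) : ℂ :=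
  dotProduct (star fun i => f i x) ((gramMatrix f μ)⁻¹.mulVec fun i => f i x)

lemma cfun_cont {f : Fin N → K → ℂ} (hcont : ∀ i, Continuous (f i)) (μ : Measure K) :
    Continuous (cfun f μ) := by
  unfold cfun
  simp only [dotProduct, Matrix.mulVec, Pi.star_apply]
  refine continuous_finset_sum _ fun i _ => ?_
  exact (Complex.continuous_conj.comp (hcont i)).mul
    (continuous_finset_sum _ fun j _ => continuous_const.mul (hcont j))

lemma distortion_eq_re {f : Fin N → K → ℂ} (μ : Measure K) (x : K) :
    distortion f μ x = (cfun f μ x).re := rfl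

lemma cfun_real {f : Fin N → K → ℂ} (μ : Measure K)
    (hG : (gramMatrix f μ).PosDef) (x : K) :
    ((distortion f μ x : ℝ) : ℂ) = cfun f μ x :=
  herm_dot_real hG.isHermitian.inv _

lemma integral_cfun {f : Fin N → K → ℂ} (hcont : ∀ i, Continuous (f i))
    (μ : Measure K) (ν : Measure K) [IsFiniteMeasure ν] :
    ∫ x, cfun f μ x ∂ν = ((gramMatrix f μ)⁻¹ * gramMatrix f ν).trace :=
  (trace_mul_gram hcont _ ν).symm

lemma integral_distortion {f : Fin N → K → ℂ} (hcont : ∀ i, Continuous (f i))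
    (μ : Measure K) (ν : Measure K) [IsFiniteMeasure ν] :
    ∫ x, distortion f μ x ∂ν = ((gramMatrix f μ)⁻¹ * gramMatrix f ν).trace.re := by
  rw [← integral_cfun hcont μ ν]
  have : ∫ x, distortion f μ x ∂ν = ∫ x, RCLike.re (cfun f μ x) ∂ν := by
    refine integral_congr_ae (ae_of_all _ fun x => ?_)
    rw [distortion_eq_re]; rfl
  rw [this, integral_re (cont_integrable (cfun_cont hcont μ) ν)]
  rfl

lemma integral_distortion_self {f : Fin N → K → ℂ} (hcont : ∀ i, Continuous (f i))
    (μ : Measure K) [IsProbabilityMeasure μ] (hG : (gramMatrix f μ).PosDef) :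
    ∫ x, distortion f μ x ∂μ = N := by
  rw [integral_distortion hcont μ μ, Matrix.nonsing_inv_mul _ hG.det_pos.ne'.isUnit,
    Matrix.trace_one]
  simp

lemma opt_imp_le {f : Fin N → K → ℂ} (hcont : ∀ i, Continuous (f i)) (hN : 1 ≤ N)
    (μ : Measure K) [IsProbabilityMeasure μ] (hG : (gramMatrix f μ).PosDef)
    (hopt : ∀ ν : Measure K, IsProbabilityMeasure ν →
      ((gramMatrix f ν).det).re ≤ ((gramMatrix f μ).det).re)
    (x : K) : distortion f μ x ≤ N := by
  by_contra hcon
  push_neg at hcon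
  set r := distortion f μ x with hr
  set ε : ℝ := r - N with hε'
  set B : ℝ := ((N : ℝ) - 1) * (r - 1) with hB'
  set D : ℝ := B + ε + 1 with hD'
  set t : ℝ := ε / D with ht'
  have hN1 : (1 : ℝ) ≤ (N : ℝ) := by exact_mod_cast hN
  have hε : 0 < ε := by simp only [hε']; linarith
  have hr1 : 1 < r := by linarith
  have hB : 0 ≤ B := mul_nonneg (by linarith) (by linarith)
  have hD : 0 < D := by simp only [hD']; linarith
  have ht0 : 0 < t := div_pos hε hD
  have ht1 : t < 1 := (div_lt_one hD).2 (by linarith)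
  have hNt : ((N : ℝ) - 1) * t ≤ 1 := by
    rw [ht', ← mul_div_assoc, div_le_one hD]
    nlinarith
  have hBt : B * t < ε := by
    rw [ht', ← mul_div_assoc, div_lt_iff₀ hD]
    nlinarith
  -- the perturbed measure
  set ν : Measure K := ENNReal.ofReal (1 - t) • μ + ENNReal.ofReal t • Measure.dirac x with hν
  haveI hνp : IsProbabilityMeasure ν := by
    constructor
    rw [hν]
    simp only [Measure.add_apply, Measure.smul_apply, smul_eq_mul, measure_univ, mul_one]
    rw [← ENNReal.ofReal_add (by linarith) ht0.le]
    norm_num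
  set G := gramMatrix f μ with hGdef
  set d : ℝ := G.det.re with hd'
  have hdpos : 0 < d := by
    have := hG.det_pos
    rw [Complex.lt_def] at this
    simpa using this.1
  have hGdet : G.det = ((d : ℝ) : ℂ) := by
    have := hG.det_pos
    rw [Complex.lt_def] at this
    apply Complex.ext <;> simp [hd', ← this.2]
  have hcast : ((1 - t : ℝ) : ℂ) = 1 - ((t : ℝ) : ℂ) := by push_cast; ring
  have htne : ((t : ℝ) : ℂ) ≠ 1 := by
    intro h
    have : (t : ℝ) = 1 := by exact_mod_cast h
    linarith
  have hgram := gram_mixture hcont μ x ht0.le ht1.le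
  have hdet : (gramMatrix f ν).det
      = (1 - ((t:ℝ):ℂ)) ^ N * G.det * (1 + (t:ℝ) * ((1:ℂ) - (t:ℝ))⁻¹ * cfun f μ x) := by
    rw [hν, hgram, hcast]
    exact det_rank_one_update G hG.det_pos.ne'.isUnit _ htne
  have hcr : cfun f μ x = ((r : ℝ) : ℂ) := (cfun_real μ hG x).symm
  have hre : (gramMatrix f ν).det.re = (1 - t) ^ N * d * (1 + t * (1 - t)⁻¹ * r) := by
    rw [hdet, hcr, hGdet]
    push_cast
    rw [← Complex.ofReal_re ((1 - t) ^ N * d * (1 + t * (1 - t)⁻¹ * r))]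
    congr 1
    push_cast
    ring
  have hineq := hopt ν hνp
  rw [hre] at hineq
  -- reduce to a real inequality
  have hs : (0:ℝ) < 1 - t := by linarith
  have hsne : (1 - t : ℝ) ≠ 0 := ne_of_gt hs
  have hkey : (1 - t) ^ (N - 1) * ((1 - t) + t * r) ≤ 1 := by
    have hpowN : (1 - t) ^ N = (1 - t) ^ (N - 1) * (1 - t) := by
      conv_lhs => rw [show N = (N - 1) + 1 from (Nat.succ_pred_eq_of_pos hN).symm]
      rw [pow_succ]
    have expand : (1 - t) ^ N * d * (1 + t * (1 - t)⁻¹ * r)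
        = ((1 - t) ^ (N - 1) * ((1 - t) + t * r)) * d := by
      rw [hpowN]
      field_simp
    rw [expand] at hineq
    by_contra hk
    push_neg at hk
    nlinarith
  have hbern : 1 - ((N : ℝ) - 1) * t ≤ (1 - t) ^ (N - 1) := by
    have := one_add_mul_le_pow (a := -t) (by linarith) (N - 1)
    have hcastN : ((N - 1 : ℕ) : ℝ) = (N : ℝ) - 1 := by
      rw [Nat.cast_sub hN]; norm_num
    rw [hcastN] at this
    calc 1 - ((N:ℝ) - 1) * t = 1 + ((N:ℝ) - 1) * (-t) := by ring
      _ ≤ (1 + -t) ^ (N - 1) := this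
      _ = (1 - t) ^ (N - 1) := by ring_nf
  have hfac : (0:ℝ) ≤ (1 - t) + t * r := by nlinarith
  have hlow : (1 - ((N : ℝ) - 1) * t) * ((1 - t) + t * r)
      ≤ (1 - t) ^ (N - 1) * ((1 - t) + t * r) :=
    mul_le_mul_of_nonneg_right hbern hfac
  have hexp : (1 - ((N : ℝ) - 1) * t) * ((1 - t) + t * r) = 1 + t * (ε - B * t) := by
    rw [hε', hB']; ring
  have hgt : 1 < (1 - ((N : ℝ) - 1) * t) * ((1 - t) + t * r) := by
    rw [hexp]
    have := mul_pos ht0 (sub_pos.mpr hBt)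
    linarith
  linarith

open scoped MatrixOrder in
lemma le_imp_opt {f : Fin N → K → ℂ} (hcont : ∀ i, Continuous (f i))
    (μ : Measure K) [IsProbabilityMeasure μ] (hG : (gramMatrix f μ).PosDef)
    (hle : ∀ x, distortion f μ x ≤ N) :
    ∀ ν : Measure K, IsProbabilityMeasure ν →
      ((gramMatrix f ν).det).re ≤ ((gramMatrix f μ).det).re := by
  intro ν hν
  set G := gramMatrix f μ with hGdef
  set Gν := gramMatrix f ν with hGνdef
  have hGinv : (G⁻¹).PosDef := hG.inv
  set S := CFC.sqrt (G⁻¹) with hS'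
  have hSps : S.PosSemidef := Matrix.nonneg_iff_posSemidef.mp (CFC.sqrt_nonneg _)
  have hSH : S.conjTranspose = S := hSps.1
  have hSS : S * S = G⁻¹ := CFC.sqrt_mul_sqrt_self _ (Matrix.nonneg_iff_posSemidef.mpr hGinv.posSemidef)
  set C := S * Gν * S with hC'
  have hCps : C.PosSemidef := by
    have := (gram_posSemidef hcont ν).mul_mul_conjTranspose_same S
    rwa [hSH] at this
  have htrace : C.trace = (G⁻¹ * Gν).trace := by
    rw [hC', Matrix.trace_mul_comm (S * Gν) S, ← Matrix.mul_assoc, hSS]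
  have htr_le : C.trace.re ≤ N := by
    rw [htrace, ← integral_distortion hcont μ ν]
    calc ∫ x, distortion f μ x ∂ν ≤ ∫ _x, (N : ℝ) ∂ν := by
          refine integral_mono (cont_integrable
            (Complex.continuous_re.comp (cfun_cont hcont μ)) ν) (integrable_const _) hle
      _ = N := by simp
  have hdet_le := psd_det_re_le_one hCps htr_le
  have hGdetne : G.det ≠ 0 := hG.det_pos.ne'
  have hdetC : Gν.det = G.det * C.det := by
    have : G.det * C.det = G.det * (S.det * Gν.det * S.det) := by
      rw [hC', Matrix.det_mul, Matrix.det_mul]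
    have hSdet : S.det * S.det = G⁻¹.det := by rw [← Matrix.det_mul, hSS]
    have hGinvdet : G⁻¹.det = (G.det)⁻¹ := by
      rw [Matrix.det_nonsing_inv, Ring.inverse_eq_inv']
    rw [this]
    have h2 : G.det * (S.det * Gν.det * S.det) = (G.det * (S.det * S.det)) * Gν.det := by ring
    rw [h2, hSdet, hGinvdet, mul_inv_cancel₀ hGdetne, one_mul]
  have hdpos : 0 < G.det.re := by
    have := hG.det_pos
    rw [Complex.lt_def] at this
    simpa using this.1
  have hGdet : G.det = ((G.det.re : ℝ) : ℂ) := by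
    have := hG.det_pos
    rw [Complex.lt_def] at this
    apply Complex.ext <;> simp [← this.2]
  calc Gν.det.re = G.det.re * C.det.re := by
        rw [hdetC]
        conv_lhs => rw [hGdet]
        rw [Complex.re_ofReal_mul]
    _ ≤ G.det.re * 1 := mul_le_mul_of_nonneg_left hdet_le hdpos.le
    _ = G.det.re := mul_one _

end main

/-- A Borel probability measure `μ` maximizes the Gram determinant over all Borel
probability measures (i.e. is an optimal measure) iff `sup_K ρ_μ = N`; and in that
case `ρ_μ = N` holds `μ`-almost everywhere. -/
theorem stmt_12 {K : Type*} [TopologicalSpace K] [CompactSpace K]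
    [MeasurableSpace K] [BorelSpace K]
    (N : ℕ) (hN : 1 ≤ N) (f : Fin N → K → ℂ) (hcont : ∀ i, Continuous (f i))
    (hind : ∀ a : Fin N → ℂ, (∀ x, ∑ i, a i * f i x = 0) → a = 0)
    (μ : Measure K) [IsProbabilityMeasure μ]
    (hG : (gramMatrix f μ).PosDef) :
    ((∀ ν : Measure K, IsProbabilityMeasure ν →
        ((gramMatrix f ν).det).re ≤ ((gramMatrix f μ).det).re) ↔
      (⨆ x : K, distortion f μ x) = N) ∧
    ((∀ ν : Measure K, IsProbabilityMeasure ν →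
        ((gramMatrix f ν).det).re ≤ ((gramMatrix f μ).det).re) →
      ∀ᵐ x ∂μ, distortion f μ x = N) := by
  have hKne : Nonempty K := by
    by_contra h
    rw [not_nonempty_iff] at h
    have h1 := hind (fun _ => 1) (fun x => (h.elim x))
    have h2 := congrFun h1 ⟨0, hN⟩
    simp at h2
  have hρcont : Continuous (distortion f μ) := Complex.continuous_re.comp (cfun_cont hcont μ)
  have main1 : (∀ ν : Measure K, IsProbabilityMeasure ν →
      ((gramMatrix f ν).det).re ≤ ((gramMatrix f μ).det).re) →
      (∀ᵐ x ∂μ, distortion f μ x = N) ∧ (⨆ x : K, distortion f μ x) = N := by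
    intro hopt
    have hle : ∀ x, distortion f μ x ≤ N := opt_imp_le hcont hN μ hG hopt
    have hint : ∫ x, distortion f μ x ∂μ = N := integral_distortion_self hcont μ hG
    have hzero : ∫ x, ((N : ℝ) - distortion f μ x) ∂μ = 0 := by
      rw [integral_sub (integrable_const _) (cont_integrable hρcont μ), hint]
      simp
    have hae0 := (integral_eq_zero_iff_of_nonneg (fun x => sub_nonneg.2 (hle x))
      ((integrable_const _).sub (cont_integrable hρcont μ))).mp hzero
    have hae : ∀ᵐ x ∂μ, distortion f μ x = N := by
      filter_upwards [hae0] with x hx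
      have hx' : (N : ℝ) - distortion f μ x = 0 := hx
      linarith
    refine ⟨hae, ?_⟩
    have hμne : μ ≠ 0 := IsProbabilityMeasure.ne_zero μ
    haveI : (MeasureTheory.ae μ).NeBot := ae_neBot.2 hμne
    obtain ⟨x0, hx0⟩ := hae.exists
    refine le_antisymm (ciSup_le hle) ?_
    rw [← hx0]
    exact le_ciSup ⟨(N : ℝ), by rintro y ⟨x, rfl⟩; exact hle x⟩ x0
  constructor
  · constructor
    · intro hopt; exact (main1 hopt).2
    · intro hsup
      have hbdd : BddAbove (Set.range (distortion f μ)) := (isCompact_range hρcont).bddAbove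
      have hle : ∀ x, distortion f μ x ≤ N := fun x => hsup ▸ le_ciSup hbdd x
      exact le_imp_opt hcont μ hG hle
  · intro hopt; exact (main1 hopt).1
end

section
/- Let K be a compact topological space, N ≥ 2, and let f_1, …, f_N : K → ℂ be continuous functions such that no nontrivial complex linear combination of them vanishes identically on K. Let μ be a Borel probability measure on K such that f_1, …, f_N are linearly independent as elements of L²(μ). Then the Lebesgue measure on ℂ^N ≅ ℝ^{2N} of the L² unit ball B² = {a ∈ ℂ^N : ∫_K |∑_i a_i f_i|² dμ ≤ 1} is strictly greater than that of the sup-norm unit ball B^∞ = {a ∈ ℂ^N : sup_{x∈K} |∑_i a_i f_i(x)| ≤ 1}. -/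
open MeasureTheory

set_option maxHeartbeats 1000000

/-- For `N ≥ 2`, the Lebesgue volume (on `ℂ^N ≅ ℝ^{2N}`) of the `L²(μ)` unit ball
of the span of `f₁,…,f_N` (in coordinates) is strictly greater than that of the
sup-norm unit ball. -/
theorem stmt_13 {K : Type*} [TopologicalSpace K] [CompactSpace K]
    [MeasurableSpace K] [BorelSpace K]
    (N : ℕ) (hN : 2 ≤ N) (f : Fin N → K → ℂ) (hcont : ∀ i, Continuous (f i))
    (hind : ∀ a : Fin N → ℂ, (∀ x, ∑ i, a i * f i x = 0) → a = 0)
    (μ : Measure K) [IsProbabilityMeasure μ]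
    (hindL2 : ∀ a : Fin N → ℂ, (∀ᵐ x ∂μ, ∑ i, a i * f i x = 0) → a = 0) :
    volume {a : Fin N → ℂ | ∀ x, ‖∑ i, a i * f i x‖ ≤ 1} <
      volume {a : Fin N → ℂ | ∫ x, ‖∑ i, a i * f i x‖ ^ 2 ∂μ ≤ 1} := by
  classical
  set s : (Fin N → ℂ) → K → ℂ := fun a x => ∑ i, a i * f i x with hs_def
  set Q : (Fin N → ℂ) → ℝ := fun a => ∫ x, ‖s a x‖ ^ 2 ∂μ with hQ_def
  -- continuity of `s a` in `x` and in `a`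
  have hscont : ∀ a, Continuous (s a) := by
    intro a; exact continuous_finset_sum _ fun i _ => continuous_const.mul (hcont i)
  have hsconta : ∀ x, Continuous fun a : Fin N → ℂ => s a x := by
    intro x; exact continuous_finset_sum _ fun i _ => (continuous_apply i).mul continuous_const
  -- integrability of continuous functions
  have hIntC : ∀ g : K → ℂ, Continuous g → Integrable g μ := fun g hg =>
    hg.integrable_of_hasCompactSupport (HasCompactSupport.of_compactSpace g)
  have hIntR : ∀ g : K → ℝ, Continuous g → Integrable g μ := fun g hg =>
    hg.integrable_of_hasCompactSupport (HasCompactSupport.of_compactSpace g)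
  have hInt : ∀ a, Integrable (fun x => ‖s a x‖ ^ 2) μ := fun a =>
    hIntR _ ((continuous_norm.comp (hscont a)).pow 2)
  -- `Q` as a quadratic form, hence continuous
  have hQ_eq : ∀ a, Q a =
      (∑ i, ∑ j, a i * (starRingEnd ℂ) (a j) * ∫ x, f i x * (starRingEnd ℂ) (f j x) ∂μ).re := by
    intro a
    have hexp : ∀ x, s a x * (starRingEnd ℂ) (s a x) =
        ∑ i, ∑ j, a i * (starRingEnd ℂ) (a j) * (f i x * (starRingEnd ℂ) (f j x)) := by
      intro x
      simp only [hs_def]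
      rw [map_sum, Finset.sum_mul_sum]
      refine Finset.sum_congr rfl fun i _ => Finset.sum_congr rfl fun j _ => ?_
      rw [map_mul]
      ring
    have h1 : ∀ x, (‖s a x‖ ^ 2 : ℝ) = (s a x * (starRingEnd ℂ) (s a x)).re := by
      intro x; rw [Complex.mul_conj, Complex.sq_norm, Complex.ofReal_re]
    have hIntTerm : ∀ i j : Fin N,
        Integrable (fun x => a i * (starRingEnd ℂ) (a j) * (f i x * (starRingEnd ℂ) (f j x))) μ :=
      fun i j => (hIntC _ ((hcont i).mul (continuous_star.comp (hcont j)))).const_mul _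
    calc Q a = ∫ x, (s a x * (starRingEnd ℂ) (s a x)).re ∂μ := by
          simp only [hQ_def]; simp_rw [h1]
      _ = (∫ x, s a x * (starRingEnd ℂ) (s a x) ∂μ).re := by
          have := _root_.integral_re (μ := μ)
            (hIntC _ ((hscont a).mul (continuous_star.comp (hscont a))))
          simpa using this
      _ = (∫ x, ∑ i, ∑ j, a i * (starRingEnd ℂ) (a j) * (f i x * (starRingEnd ℂ) (f j x)) ∂μ).re := by
          simp_rw [hexp]
      _ = (∑ i, ∑ j, a i * (starRingEnd ℂ) (a j) * ∫ x, f i x * (starRingEnd ℂ) (f j x) ∂μ).re := by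
          rw [integral_finset_sum _ fun i _ => integrable_finset_sum _ fun j _ => hIntTerm i j]
          congr 1
          refine Finset.sum_congr rfl fun i _ => ?_
          rw [integral_finset_sum _ fun j _ => hIntTerm i j]
          exact Finset.sum_congr rfl fun j _ => integral_const_mul _ _
  have hQcont : Continuous Q := by
    rw [funext hQ_eq]
    apply Complex.continuous_re.comp
    apply continuous_finset_sum _ fun i _ => continuous_finset_sum _ fun j _ => ?_
    exact ((continuous_apply i).mul (continuous_star.comp (continuous_apply j))).mul
      continuous_const
  have hQnonneg : ∀ a, 0 ≤ Q a := fun a => integral_nonneg fun x => by positivity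
  -- scaling
  have hssmul : ∀ (c : ℂ) (a) (x), s (c • a) x = c * s a x := by
    intro c a x
    simp only [hs_def, Pi.smul_apply, smul_eq_mul, Finset.mul_sum, mul_assoc]
  have hQsmul : ∀ (c : ℂ) (a), Q (c • a) = ‖c‖ ^ 2 * Q a := by
    intro c a
    simp only [hQ_def]
    rw [← integral_const_mul]
    congr 1; funext x
    rw [hssmul, norm_mul, mul_pow]
  -- the key existence statement: the two norms differ somewhere
  have hex : ∃ a x₀, Q a < ‖s a x₀‖ ^ 2 := by
    by_contra hno
    push_neg at hno
    have hae : ∀ a : Fin N → ℂ, ∀ᵐ x ∂μ, ‖s a x‖ ^ 2 = Q a := by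
      intro a
      have hnn : 0 ≤ fun x => Q a - ‖s a x‖ ^ 2 := fun x => sub_nonneg.2 (hno a x)
      have hint : Integrable (fun x => Q a - ‖s a x‖ ^ 2) μ :=
        (integrable_const _).sub (hInt a)
      have h0 : ∫ x, (Q a - ‖s a x‖ ^ 2) ∂μ = 0 := by
        rw [integral_sub (integrable_const _) (hInt a), integral_const]
        simp [hQ_def]
      have hz := (integral_eq_zero_iff_of_nonneg hnn hint).1 h0
      filter_upwards [hz] with x hx
      have hx' : Q a - ‖s a x‖ ^ 2 = 0 := hx
      linarith
    set i₀ : Fin N := ⟨0, by omega⟩ with hi₀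
    set i₁ : Fin N := ⟨1, by omega⟩ with hi₁
    have hne : i₁ ≠ i₀ := by simp [hi₀, hi₁, Fin.ext_iff]
    set av : ℂ → ℂ → Fin N → ℂ := fun u v i => if i = i₀ then u else if i = i₁ then v else 0
      with hav
    have hsav : ∀ u v x, s (av u v) x = u * f i₀ x + v * f i₁ x := by
      intro u v x
      simp only [hs_def, hav]
      have hsplit : ∀ i : Fin N, (if i = i₀ then u else if i = i₁ then v else 0) * f i x
          = (if i = i₀ then u * f i₀ x else 0) + (if i = i₁ then v * f i₁ x else 0) := by
        intro i
        by_cases h0 : i = i₀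
        · subst h0; simp [Ne.symm hne]
        · by_cases h1 : i = i₁
          · subst h1; simp [h0]
          · simp [h0, h1]
      rw [Finset.sum_congr rfl fun i _ => hsplit i, Finset.sum_add_distrib,
        Finset.sum_ite_eq' Finset.univ i₀, Finset.sum_ite_eq' Finset.univ i₁]
      simp
    have key : ∀ u v : ℂ, ∀ᵐ x ∂μ, ‖u * f i₀ x + v * f i₁ x‖ ^ 2 = Q (av u v) := by
      intro u v
      filter_upwards [hae (av u v)] with x hx
      rw [← hsav u v x]; exact hx
    set c00 := Q (av 1 0) with hc00_def
    set c01 := Q (av 0 1) with hc01_def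
    set c11 := Q (av 1 1) with hc11_def
    set c1I := Q (av 1 Complex.I) with hc1I_def
    set u₀ : ℂ := (((c11 - c00 - c01) / 2 : ℝ) : ℂ) - (((c1I - c00 - c01) / 2 : ℝ) : ℂ) * Complex.I
      with hu₀
    have hmain : ∀ᵐ x ∂μ, s (av u₀ (-(c00 : ℝ) : ℂ)) x = 0 := by
      filter_upwards [key 1 0, key 0 1, key 1 1, key 1 Complex.I] with x h1 h2 h3 h4
      rw [hsav]
      simp only [one_mul, zero_mul, add_zero, zero_add] at h1 h2 h3 h4
      rw [Complex.sq_norm] at h1 h2 h3 h4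
      set g := f i₀ x with hg
      set h := f i₁ x with hh
      rw [← hc00_def] at h1
      rw [← hc01_def] at h2
      rw [← hc11_def] at h3
      rw [← hc1I_def] at h4
      have hu₀re : u₀.re = (c11 - c00 - c01) / 2 := by simp [hu₀]
      have hu₀im : u₀.im = -((c1I - c00 - c01) / 2) := by simp [hu₀]
      simp only [Complex.normSq_apply, Complex.add_re, Complex.add_im, Complex.mul_re,
        Complex.mul_im, Complex.I_re, Complex.I_im, zero_mul, one_mul, mul_zero, mul_one,
        zero_sub, sub_zero, zero_add, add_zero] at h1 h2 h3 h4
      rw [Complex.ext_iff]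
      constructor
      · simp only [Complex.add_re, Complex.mul_re, Complex.mul_im, hu₀re, hu₀im,
          Complex.I_re, Complex.I_im, Complex.ofReal_re, Complex.ofReal_im, Complex.neg_re,
          Complex.neg_im, Complex.zero_re, zero_mul, one_mul, mul_zero, mul_one, zero_sub,
          sub_zero, zero_add, add_zero, neg_zero, neg_neg]
        linear_combination (-g.re/2) * h3 + (-g.im/2) * h4 +
          ((g.re + g.im)/2 + h.re) * h1 + ((g.re + g.im)/2) * h2
      · simp only [Complex.add_im, Complex.mul_re, Complex.mul_im, hu₀re, hu₀im,
          Complex.I_re, Complex.I_im, Complex.ofReal_re, Complex.ofReal_im, Complex.neg_re,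
          Complex.neg_im, Complex.zero_im, zero_mul, one_mul, mul_zero, mul_one, zero_sub,
          sub_zero, zero_add, add_zero, neg_zero, neg_neg]
        linear_combination (-g.im/2) * h3 + (g.re/2) * h4 +
          ((g.im - g.re)/2 + h.im) * h1 + ((g.im - g.re)/2) * h2
    have hzero : av u₀ (-(c00 : ℝ) : ℂ) = 0 := by
      apply hindL2
      simpa only [hs_def] using hmain
    have h00 : (c00 : ℂ) = 0 := by
      have h' := congrFun hzero i₁
      simp only [hav, if_neg hne, if_pos rfl, Pi.zero_apply] at h'
      exact neg_eq_zero.1 h'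
    have hc00 : c00 = 0 := by exact_mod_cast h00
    have hmain2 : ∀ᵐ x ∂μ, s (av 1 0) x = 0 := by
      filter_upwards [key 1 0] with x hx
      rw [hsav]
      simp only [one_mul, zero_mul, add_zero]
      rw [← hc00_def, hc00] at hx
      simp only [one_mul, zero_mul, add_zero] at hx
      have habs : ‖f i₀ x‖ = 0 := by
        have := norm_nonneg (f i₀ x)
        nlinarith
      exact norm_eq_zero.1 habs
    have hz10 : av 1 0 = 0 := by
      apply hindL2
      simpa only [hs_def] using hmain2
    have h' := congrFun hz10 i₀
    simp [hav] at h'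
  -- scale the witness
  obtain ⟨a₀, x₀, hlt⟩ := hex
  have hQ0 : 0 ≤ Q a₀ := hQnonneg a₀
  set t : ℝ := ‖s a₀ x₀‖ with ht_def
  have ht2 : Q a₀ < t ^ 2 := hlt
  have ht0 : 0 ≤ t := norm_nonneg _
  have hhalf : 0 ≤ (Q a₀ + t ^ 2) / 2 := by nlinarith [hQ0, sq_nonneg t]
  set r : ℝ := Real.sqrt ((Q a₀ + t ^ 2) / 2) with hr_def
  have hr2 : r ^ 2 = (Q a₀ + t ^ 2) / 2 := Real.sq_sqrt hhalf
  have hrpos : 0 < r := Real.sqrt_pos.2 (by nlinarith)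
  set a₁ : Fin N → ℂ := ((r⁻¹ : ℝ) : ℂ) • a₀ with ha₁_def
  have habsc : ‖((r⁻¹ : ℝ) : ℂ)‖ = r⁻¹ := by
    rw [Complex.norm_real, Real.norm_eq_abs, abs_of_pos (inv_pos.2 hrpos)]
  have ha₁Q : Q a₁ < 1 := by
    rw [ha₁_def, hQsmul, habsc]
    rw [inv_pow]
    rw [inv_mul_lt_one₀ (pow_pos hrpos 2)]
    nlinarith
  have ha₁x : 1 < ‖s a₁ x₀‖ := by
    rw [ha₁_def, hssmul, norm_mul, habsc, ← ht_def]
    rw [lt_inv_mul_iff₀ hrpos, mul_one]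
    nlinarith [Real.sqrt_lt_sqrt hhalf (show (Q a₀ + t ^ 2) / 2 < t ^ 2 by nlinarith),
      Real.sqrt_sq ht0]
  -- the two bodies
  set A : Set (Fin N → ℂ) := {a | ∀ x, ‖s a x‖ ≤ 1} with hA_def
  set B : Set (Fin N → ℂ) := {a | Q a ≤ 1} with hB_def
  have hAB : A ⊆ B := by
    intro a ha
    have : Q a ≤ ∫ _x, (1 : ℝ) ∂μ := by
      apply integral_mono (hInt a) (integrable_const 1)
      intro x
      exact pow_le_one₀ (norm_nonneg _) (ha x)
    show Q a ≤ 1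
    simpa using this
  -- A is bounded, hence has finite volume
  have hAvol : volume A ≠ ⊤ := by
    let T : (Fin N → ℂ) →ₗ[ℂ] C(K, ℂ) :=
      { toFun := fun a => ⟨s a, hscont a⟩
        map_add' := by
          intro a b; ext x
          simp [hs_def, add_mul, Finset.sum_add_distrib]
        map_smul' := by
          intro c a; ext x
          simp [hssmul c a x] }
    have hker : LinearMap.ker T = ⊥ := by
      rw [LinearMap.ker_eq_bot']
      intro a ha
      refine hind a fun x => ?_
      have := DFunLike.congr_fun ha x
      simpa [T] using this
    obtain ⟨C, hC0, hC⟩ := T.exists_antilipschitzWith hker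
    have hsub : A ⊆ Metric.closedBall 0 C := by
      intro a ha
      have ha' : ∀ x, ‖s a x‖ ≤ 1 := ha
      rw [Metric.mem_closedBall, dist_zero_right]
      have h1 : ‖T a‖ ≤ 1 := by
        rw [ContinuousMap.norm_le _ zero_le_one]
        intro x
        simpa [T] using ha' x
      calc ‖a‖ = dist a 0 := (dist_zero_right a).symm
        _ ≤ C * dist (T a) (T 0) := hC.le_mul_dist a 0
        _ = C * ‖T a‖ := by rw [map_zero, dist_zero_right]
        _ ≤ C * 1 := mul_le_mul_of_nonneg_left h1 C.coe_nonneg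
        _ = C := mul_one _
    exact ((measure_mono hsub).trans_lt measure_closedBall_lt_top).ne
  -- the open slice
  set U : Set (Fin N → ℂ) := {a | Q a < 1} ∩ {a | 1 < ‖s a x₀‖} with hU_def
  have hUopen : IsOpen U :=
    (isOpen_lt hQcont continuous_const).inter
      (isOpen_lt continuous_const (continuous_norm.comp (hsconta x₀)))
  have ha₁U : a₁ ∈ U := ⟨ha₁Q, ha₁x⟩
  have hUB : U ⊆ B := by
    intro a ha
    have h1 : Q a < 1 := ha.1
    show Q a ≤ 1
    exact le_of_lt h1
  have hdisj : Disjoint A U := by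
    rw [Set.disjoint_left]
    rintro a haA ⟨-, hax⟩
    exact absurd (haA x₀) (not_le.2 hax)
  calc volume A < volume A + volume U :=
        ENNReal.lt_add_right hAvol (hUopen.measure_pos volume ⟨a₁, ha₁U⟩).ne'
    _ = volume (A ∪ U) := (measure_union hdisj hUopen.measurableSet).symm
    _ ≤ volume B := measure_mono (Set.union_subset hAB hUB)
end

section
/- Let X be a set, K ⊆ X, N ≥ 1, and let f_1, …, f_N : X → ℂ be functions. Let p_1, …, p_N ∈ K and C ≥ 0 be such that for every s in the complex linear span of f_1, …, f_N, sup_{x∈K} |s(x)| ≤ C · max_{1≤j≤N} |s(p_j)|. Then for every (q_1, …, q_N) ∈ K^N, |det(f_i(q_j))_{1≤i,j≤N}| ≤ C^N · |det(f_i(p_j))_{1≤i,j≤N}|. -/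
/-- If the sup norm on `K` of every element `s` of the span of `f₁,…,f_N` is
bounded by `C · max_j |s(p_j)|`, then the modulus of the Vandermonde-type
determinant at any configuration in `K` is at most `C^N` times its modulus at
`P = (p₁,…,p_N)`. -/
theorem stmt_15 {X : Type*} (K : Set X) (N : ℕ) (hN : 1 ≤ N)
    (f : Fin N → X → ℂ) (p : Fin N → X) (hp : ∀ j, p j ∈ K)
    (C : ℝ) (hC : 0 ≤ C)
    (hdist : ∀ s ∈ Submodule.span ℂ (Set.range f), ∀ x ∈ K,
      ‖s x‖ ≤ C * Finset.univ.sup'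
        (Finset.univ_nonempty_iff.mpr ⟨⟨0, hN⟩⟩) fun j => ‖s (p j)‖) :
    ∀ q : Fin N → X, (∀ j, q j ∈ K) →
      ‖(Matrix.of fun i j => f i (q j)).det‖ ≤
        C ^ N * ‖(Matrix.of fun i j => f i (p j)).det‖ := by
  classical
  set T : (Fin N → X) → Matrix (Fin N) (Fin N) ℂ :=
    fun q => Matrix.of fun j i => f i (q j) with hT
  have hTdet : ∀ q : Fin N → X,
      (Matrix.of fun i j => f i (q j)).det = (T q).det := by
    intro q
    rw [← Matrix.det_transpose]
    rfl
  have key : ∀ k : ℕ, ∀ q : Fin N → X, (∀ j, q j ∈ K) →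
      (∀ j : Fin N, k ≤ (j : ℕ) → ∃ i, q j = p i) →
      ‖(T q).det‖ ≤ C ^ (min k N) * ‖(T p).det‖ := by
    intro k
    induction k with
    | zero =>
      intro q hqK hq
      choose σ hσ using fun j => hq j (Nat.zero_le _)
      have hTq : T q = (T p).submatrix σ id := by
        ext j i
        simp [hT, hσ]
      by_cases hinj : Function.Injective σ
      · have hbij : Function.Bijective σ := Finite.injective_iff_bijective.mp hinj
        set e := Equiv.ofBijective σ hbij with he
        have hsub : (T p).submatrix σ id = (T p).submatrix (e : Fin N → Fin N) id := rfl
        rw [hTq, hsub, Matrix.det_permute e (T p), norm_mul]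
        rcases Int.units_eq_one_or (Equiv.Perm.sign e) with h | h <;>
          simp [h, Nat.min_eq_left (Nat.zero_le N)]
      · rw [Function.not_injective_iff] at hinj
        obtain ⟨a, b, hab, hne⟩ := hinj
        have : (T q).det = 0 :=
          Matrix.det_zero_of_row_eq hne (by rw [hTq]; ext i; simp [hab])
        rw [this]
        simp only [norm_zero]
        positivity
    | succ k ih =>
      intro q hqK hq
      by_cases hkN : k < N
      · set m : Fin N := ⟨k, hkN⟩ with hm
        -- linearity of determinant in row m
        have hlin : ∀ (M : Matrix (Fin N) (Fin N) ℂ) (v : Fin N → ℂ),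
            (M.updateRow m v).det =
              ∑ i, v i * (M.updateRow m (Pi.single i 1)).det := by
          intro M v
          have hL : ∀ w : Fin N → ℂ, (M.updateRow m w).det =
              ((Matrix.detRowAlternating :
                (Fin N → ℂ) [⋀^Fin N]→ₗ[ℂ] ℂ).toMultilinearMap.toLinearMap M m) w :=
            fun w => rfl
          have hv : v = ∑ i, v i • (Pi.single i 1 : Fin N → ℂ) := by
            ext j
            simp [Pi.single_apply]
          rw [hL v]
          conv_lhs => rw [hv]
          rw [map_sum]
          refine Finset.sum_congr rfl fun i _ => ?_
          rw [map_smul, ← hL]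
          simp
        have hupd : ∀ x : X, T (Function.update q m x) =
            (T q).updateRow m (fun i => f i x) := by
          intro x
          ext j i
          by_cases hj : j = m
          · subst hj; simp [hT]
          · simp [hT, Matrix.updateRow_ne hj, Function.update_of_ne hj]
        set c : Fin N → ℂ := fun i => ((T q).updateRow m (Pi.single i 1)).det with hc
        set s : X → ℂ := fun x => ∑ i, c i * f i x with hs
        have hsdet : ∀ x : X, s x = (T (Function.update q m x)).det := by
          intro x
          rw [hupd x, hlin]
          simp [hs, hc, mul_comm]
        have hsmem : s ∈ Submodule.span ℂ (Set.range f) := by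
          have : s = ∑ i, c i • f i := by
            ext x
            simp [hs, Finset.sum_apply]
          rw [this]
          exact Submodule.sum_mem _ fun i _ =>
            Submodule.smul_mem _ _ (Submodule.subset_span ⟨i, rfl⟩)
        -- bound each s (p j) by the inductive hypothesis
        have hbound : ∀ j : Fin N, ‖s (p j)‖ ≤
            C ^ (min k N) * ‖(T p).det‖ := by
          intro j
          rw [hsdet]
          apply ih
          · intro j'
            by_cases hj' : j' = m
            · subst hj'; simpa using hp j
            · rw [Function.update_of_ne hj']; exact hqK j'
          · intro j' hj'
            by_cases hj'm : j' = m
            · subst hj'm; rw [Function.update_self]; exact ⟨j, rfl⟩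
            · rw [Function.update_of_ne hj'm]
              exact hq j' (lt_of_le_of_ne hj' (by
                simp only [ne_eq]
                intro hcon
                exact hj'm (Fin.ext hcon.symm)) : k < (j' : ℕ))
        have hqm : Function.update q m (q m) = q := Function.update_eq_self m q
        have h1 : ‖(T q).det‖ = ‖s (q m)‖ := by
          rw [hsdet, hqm]
        rw [h1]
        calc ‖s (q m)‖ ≤ C * Finset.univ.sup'
              (Finset.univ_nonempty_iff.mpr ⟨⟨0, hN⟩⟩)
              (fun j => ‖s (p j)‖) := hdist s hsmem (q m) (hqK m)
          _ ≤ C * (C ^ (min k N) * ‖(T p).det‖) := by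
              apply mul_le_mul_of_nonneg_left _ hC
              exact Finset.sup'_le _ _ fun j _ => hbound j
          _ ≤ C ^ (min (k + 1) N) * ‖(T p).det‖ := by
              rw [Nat.min_eq_left (le_of_lt hkN), Nat.min_eq_left hkN, ← mul_assoc, ← pow_succ']
        -- done
      · push_neg at hkN
        have h1 : min (k + 1) N = N := Nat.min_eq_right (le_trans hkN (Nat.le_succ k))
        have h2 : min k N = N := Nat.min_eq_right hkN
        have := ih q hqK fun j hj =>
          absurd (lt_of_lt_of_le j.isLt hkN) (not_lt.mpr hj)
        rw [h2] at this
        rw [h1]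
        exact this
  intro q hqK
  have := key N q hqK (fun j hj => absurd j.isLt (not_lt.mpr hj))
  rw [hTdet q, hTdet p]
  simpa [Nat.min_self] using this
end
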